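/- arXiv:2303.18208 — 6 statements merged into one kernel-verified Lean document; each statement's English description precedes it below -/
import Mathlib

section
/- On ℝ⁷, let φ, ψ satisfy the G2 contraction identities, and let W = (W_{ijkl}) be an algebraic curvature tensor that is Ricci-traceless (∑_k W_{kijk} = 0 for all i, j) and lies in Ω²₁₄ in each index pair: ∑_{k,l} W_{ijkl}φ_{klm} = 0 and ∑_{k,l} W_{ijkl}ψ_{kluv} = 2 W_{ijuv} for all indices. Let h = (h_{ij}) be symmetric, let β = h ⋄ φ, and define the 3-form γ_{abc} = ∑_{p,u} (W_{abpu}β_{puc} + W_{acpu}β_{pbu} + W_{bcpu}β_{apu}) (the Weyl-curvature term of the Weitzenböck formula on 3-forms). Then ∑_{b,c} γ_{abc}φ_{tbc} = 8 (W̊h)_{at} for all a, t, where (W̊h)_{ij} = ∑_{k,l} W_{kilj}h_{kl}. -/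
open scoped BigOperators

/-- Kronecker delta on `Fin 7`. -/
noncomputable def kd7 (i j : Fin 7) : ℝ := if i = j then 1 else 0

private lemma scomm' (g : Fin 7 → Fin 7 → ℝ) : ∑ x, ∑ y, g x y = ∑ y, ∑ x, g x y :=
  Finset.sum_comm

private lemma m3' (g : Fin 7 → Fin 7 → Fin 7 → ℝ) :
    ∑ x, ∑ y, ∑ z, g x y z = ∑ y, ∑ z, ∑ x, g x y z :=
  calc ∑ x, ∑ y, ∑ z, g x y z = ∑ y, ∑ x, ∑ z, g x y z := Finset.sum_comm
    _ = ∑ y, ∑ z, ∑ x, g x y z := Finset.sum_congr rfl fun _ _ => Finset.sum_comm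

private lemma m4' (g : Fin 7 → Fin 7 → Fin 7 → Fin 7 → ℝ) :
    ∑ x, ∑ y, ∑ z, ∑ w, g x y z w = ∑ y, ∑ z, ∑ w, ∑ x, g x y z w :=
  calc ∑ x, ∑ y, ∑ z, ∑ w, g x y z w = ∑ y, ∑ x, ∑ z, ∑ w, g x y z w := Finset.sum_comm
    _ = ∑ y, ∑ z, ∑ w, ∑ x, g x y z w := Finset.sum_congr rfl fun _ _ => m3' _

private lemma m5' (g : Fin 7 → Fin 7 → Fin 7 → Fin 7 → Fin 7 → ℝ) :
    ∑ x, ∑ y, ∑ z, ∑ w, ∑ v, g x y z w v = ∑ y, ∑ z, ∑ w, ∑ v, ∑ x, g x y z w v :=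
  calc ∑ x, ∑ y, ∑ z, ∑ w, ∑ v, g x y z w v
      = ∑ y, ∑ x, ∑ z, ∑ w, ∑ v, g x y z w v := Finset.sum_comm
    _ = ∑ y, ∑ z, ∑ w, ∑ v, ∑ x, g x y z w v := Finset.sum_congr rfl fun _ _ => m4' _

private lemma relswap' (f : Fin 7 → Fin 7 → ℝ) : ∑ k, ∑ l, f k l = ∑ k, ∑ l, f l k :=
  Finset.sum_comm

private lemma csum2' {f g : Fin 7 → Fin 7 → ℝ} (H : ∀ k l, f k l = g k l) :
    ∑ k, ∑ l, f k l = ∑ k, ∑ l, g k l :=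
  Finset.sum_congr rfl fun k _ => Finset.sum_congr rfl fun l _ => H k l

private lemma csum4' {f g : Fin 7 → Fin 7 → Fin 7 → Fin 7 → ℝ}
    (H : ∀ a b c d, f a b c d = g a b c d) :
    ∑ a, ∑ b, ∑ c, ∑ d, f a b c d = ∑ a, ∑ b, ∑ c, ∑ d, g a b c d :=
  Finset.sum_congr rfl fun a _ => Finset.sum_congr rfl fun b _ =>
    Finset.sum_congr rfl fun c _ => Finset.sum_congr rfl fun d _ => H a b c d

theorem G2_weyl_term_of_weitzenbock_on_3forms
    (φ : Fin 7 → Fin 7 → Fin 7 → ℝ)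
    (ψ : Fin 7 → Fin 7 → Fin 7 → Fin 7 → ℝ)
    (W : Fin 7 → Fin 7 → Fin 7 → Fin 7 → ℝ)
    (h : Fin 7 → Fin 7 → ℝ)
    (β : Fin 7 → Fin 7 → Fin 7 → ℝ)
    (γ : Fin 7 → Fin 7 → Fin 7 → ℝ)
    (hφ1 : ∀ i j k, φ i j k = - φ j i k)
    (hφ2 : ∀ i j k, φ i j k = - φ i k j)
    (hψ1 : ∀ i j k l, ψ i j k l = - ψ j i k l)
    (hψ2 : ∀ i j k l, ψ i j k l = - ψ i k j l)
    (hψ3 : ∀ i j k l, ψ i j k l = - ψ i j l k)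
    (hφφ : ∀ i j a b, ∑ k, φ i j k * φ a b k =
      kd7 i a * kd7 j b - kd7 i b * kd7 j a - ψ i j a b)
    (hφψ : ∀ i j a b c, ∑ k, φ i j k * ψ a b c k =
        kd7 i a * φ j b c + kd7 i b * φ a j c + kd7 i c * φ a b j
      - kd7 a j * φ i b c - kd7 b j * φ a i c - kd7 c j * φ a b i)
    (hW1 : ∀ i j p q, W i j p q = - W j i p q)
    (hW2 : ∀ i j p q, W i j p q = - W i j q p)
    (hW3 : ∀ i j p q, W i j p q = W p q i j)
    (hBianchi : ∀ i j p q, W i j p q + W p i j q + W j p i q = 0)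
    (hRic : ∀ i j, ∑ k, W k i j k = 0)
    (hW14φ : ∀ i j m, ∑ k, ∑ l, W i j k l * φ k l m = 0)
    (hW14ψ : ∀ i j u v, ∑ k, ∑ l, W i j k l * ψ k l u v = 2 * W i j u v)
    (hsymm : ∀ i j, h i j = h j i)
    (hβ : ∀ i j k, β i j k =
      ∑ p, (h i p * φ p j k + h j p * φ i p k + h k p * φ i j p))
    (hγ : ∀ a b c, γ a b c = ∑ p, ∑ u,
      (W a b p u * β p u c + W a c p u * β p b u + W b c p u * β a p u)) :
    ∀ a t, ∑ b, ∑ c, γ a b c * φ t b c = 8 * ∑ k, ∑ l, W k a l t * h k l := by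
  -- pointwise symmetry helpers
  have cyc : ∀ i j k, φ i j k = φ j k i := by
    intro i j k; rw [hφ1 i j k, hφ2 j i k]; ring
  have ps24 : ∀ i j k l, ψ i j k l = -ψ i l k j := by
    intro i j k l; rw [hψ2 i j k l, hψ3 i k j l, hψ2 i k l j]; ring
  have psw : ∀ i j k l, ψ i j k l = ψ k l i j := by
    intro i j k l
    rw [hψ1 i j k l, hψ2 j i k l, hψ3 j k i l, hψ1 j k l i, hψ2 k j l i, hψ3 k l j i]; ring
  have pmove : ∀ i j k l, ψ i j k l = -ψ j l i k := by
    intro i j k l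
    rw [hψ1 i j k l, hψ2 j i k l, hψ3 j k i l, hψ2 j k l i, hψ3 j l k i]; ring
  have keyW : ∀ x b p u, W x b p u - W x u p b = W x p b u := by
    intro x b p u
    have h1 := hBianchi x b p u
    have h2 := hW1 p x b u
    have h3 := hW3 b p x u
    have h4 := hW2 x u b p
    linarith
  -- the two key mixed contractions
  have LemA : ∀ x p s q, ∑ b, ∑ u, W x b p u * ψ s b q u = -W x p s q := by
    intro x p s q
    have hM : (∑ b, ∑ u, W x u p b * ψ s b q u) = -(∑ b, ∑ u, W x b p u * ψ s b q u) := by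
      calc (∑ b, ∑ u, W x u p b * ψ s b q u)
          = ∑ b, ∑ u, W x b p u * ψ s u q b := Finset.sum_comm
        _ = ∑ b, ∑ u, -(W x b p u * ψ s b q u) := csum2' fun b u => by rw [ps24 s u q b]; ring
        _ = -(∑ b, ∑ u, W x b p u * ψ s b q u) := by simp
    have hsplit : ∑ b, ∑ u, (W x b p u - W x u p b) * ψ s b q u
        = (∑ b, ∑ u, W x b p u * ψ s b q u) - (∑ b, ∑ u, W x u p b * ψ s b q u) := by
      simp [sub_mul, Finset.sum_sub_distrib]
    have hval : ∑ b, ∑ u, (W x b p u - W x u p b) * ψ s b q u = -(2 * W x p s q) := by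
      calc ∑ b, ∑ u, (W x b p u - W x u p b) * ψ s b q u
          = ∑ b, ∑ u, -(W x p b u * ψ b u s q) := csum2' fun b u => by
            rw [keyW x b p u, pmove s b q u]; ring
        _ = -(∑ b, ∑ u, W x p b u * ψ b u s q) := by simp
        _ = -(2 * W x p s q) := by rw [hW14ψ x p s q]
    linarith
  have LemB : ∀ x u s q, ∑ b, ∑ p, W x b p u * ψ p q s b = -W x u s q := by
    intro x u s q
    have e1 : ∑ b, ∑ p, W x b p u * ψ p q s b = ∑ p, ∑ b, W u p x b * ψ q p s b := by
      calc ∑ b, ∑ p, W x b p u * ψ p q s b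
          = ∑ b, ∑ p, W u p x b * ψ q p s b := csum2' fun b p => by
            rw [hW3 x b p u, hW1 p u x b, hψ1 p q s b]; ring
        _ = ∑ p, ∑ b, W u p x b * ψ q p s b := Finset.sum_comm
    rw [e1, LemA u x q s, hW1 u x q s, hW2 x u q s]; ring
  intro a t
  -- Ricci-type contractions
  have R1 : ∀ p, ∑ c, W a c p c = 0 := by
    intro p
    have : ∑ c, W a c p c = -∑ c, W c a p c := by
      calc ∑ c, W a c p c = ∑ c, -(W c a p c) :=
            Finset.sum_congr rfl fun c _ => by rw [hW1 a c p c]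
        _ = -∑ c, W c a p c := by simp
    rw [this, hRic a p]; ring
  have R2 : ∀ u, ∑ b, W a b b u = 0 := by
    intro u
    calc ∑ b, W a b b u = ∑ b, W b u a b :=
          Finset.sum_congr rfl fun b _ => hW3 a b b u
      _ = 0 := hRic u a
  -- the S-contractions
  have hS' : ∑ k, ∑ l, W k t l a * h k l = ∑ k, ∑ l, W k a l t * h k l := by
    calc ∑ k, ∑ l, W k t l a * h k l
        = ∑ k, ∑ l, W l a k t * h k l := csum2' fun k l => by rw [hW3 k t l a]
      _ = ∑ k, ∑ l, W k a l t * h l k := relswap' _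
      _ = ∑ k, ∑ l, W k a l t * h k l := csum2' fun k l => by rw [hsymm l k]
  have hQ : ∑ k, ∑ l, W k a t l * h k l = -∑ k, ∑ l, W k a l t * h k l := by
    calc ∑ k, ∑ l, W k a t l * h k l
        = ∑ k, ∑ l, W t l k a * h k l := csum2' fun k l => by rw [hW3 k a t l]
      _ = ∑ k, ∑ l, W t k l a * h l k := relswap' _
      _ = ∑ k, ∑ l, -(W k t l a * h k l) := csum2' fun k l => by
          rw [hW1 t k l a, hsymm l k]; ring
      _ = -∑ k, ∑ l, W k t l a * h k l := by simp
      _ = -∑ k, ∑ l, W k a l t * h k l := by rw [hS']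
  have SA1 : ∑ k, ∑ l, W a k t l * h k l = ∑ k, ∑ l, W k a l t * h k l := by
    calc ∑ k, ∑ l, W a k t l * h k l
        = ∑ k, ∑ l, -(W k a t l * h k l) := csum2' fun k l => by rw [hW1 a k t l]; ring
      _ = -∑ k, ∑ l, W k a t l * h k l := by simp
      _ = ∑ k, ∑ l, W k a l t * h k l := by rw [hQ]; ring
  have SA2 : ∑ k, ∑ l, W a k t l * h l k = ∑ k, ∑ l, W k a l t * h k l := by
    calc ∑ k, ∑ l, W a k t l * h l k
        = ∑ k, ∑ l, W a k t l * h k l := csum2' fun k l => by rw [hsymm l k]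
      _ = ∑ k, ∑ l, W k a l t * h k l := SA1
  have SB1 : ∑ k, ∑ l, W a k l t * h l k = -∑ k, ∑ l, W k a l t * h k l := by
    calc ∑ k, ∑ l, W a k l t * h l k
        = ∑ k, ∑ l, -(W k a l t * h k l) := csum2' fun k l => by
          rw [hW1 a k l t, hsymm l k]; ring
      _ = -∑ k, ∑ l, W k a l t * h k l := by simp
  -- evaluators for the quadruple sums appearing after contracting the φφ pair
  have hA : ∑ b, ∑ p, ∑ u, ∑ q, W a b p u * h p q * (kd7 q t * kd7 u b) = 0 := by
    have col : (∑ b, ∑ p, ∑ u, ∑ q, W a b p u * h p q * (kd7 q t * kd7 u b))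
        = ∑ b, ∑ p, W a b p b * h p t := by
      simp [kd7, mul_ite, ite_mul, Finset.mul_sum]
    rw [col]
    calc ∑ b, ∑ p, W a b p b * h p t = ∑ p, ∑ b, W a b p b * h p t := Finset.sum_comm
      _ = ∑ p, (∑ b, W a b p b) * h p t :=
          Finset.sum_congr rfl fun p _ => (Finset.sum_mul _ _ _).symm
      _ = 0 := by simp [R1]
  have hB : ∑ b, ∑ p, ∑ u, ∑ q, W a b p u * h p q * (kd7 q b * kd7 u t)
      = -∑ k, ∑ l, W k a l t * h k l := by
    have col : (∑ b, ∑ p, ∑ u, ∑ q, W a b p u * h p q * (kd7 q b * kd7 u t))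
        = ∑ b, ∑ p, W a b p t * h p b := by
      simp [kd7, mul_ite, ite_mul, Finset.mul_sum]
    rw [col]; exact SB1
  have hC : ∑ b, ∑ p, ∑ u, ∑ q, W a b p u * h p q * ψ q u t b
      = -∑ k, ∑ l, W k a l t * h k l := by
    have r : ∑ b, ∑ p, ∑ u, ∑ q, W a b p u * h p q * ψ q u t b
        = ∑ p, ∑ q, ∑ b, ∑ u, W a b p u * h p q * ψ q u t b := by
      calc ∑ b, ∑ p, ∑ u, ∑ q, W a b p u * h p q * ψ q u t b
          = ∑ p, ∑ u, ∑ q, ∑ b, W a b p u * h p q * ψ q u t b := m4' _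
        _ = ∑ p, ∑ q, ∑ b, ∑ u, W a b p u * h p q * ψ q u t b :=
            Finset.sum_congr rfl fun p _ => m3' _
    rw [r]
    have inner : ∀ p q, ∑ b, ∑ u, W a b p u * h p q * ψ q u t b
        = -(W a p t q * h p q) := by
      intro p q
      calc ∑ b, ∑ u, W a b p u * h p q * ψ q u t b
          = ∑ b, ∑ u, h p q * (W a b p u * ψ t b q u) := csum2' fun b u => by
            rw [psw q u t b]; ring
        _ = h p q * ∑ b, ∑ u, W a b p u * ψ t b q u := by
            simp [Finset.mul_sum]
        _ = -(W a p t q * h p q) := by rw [LemA a p t q]; ring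
    calc ∑ p, ∑ q, ∑ b, ∑ u, W a b p u * h p q * ψ q u t b
        = ∑ p, ∑ q, -(W a p t q * h p q) := csum2' fun p q => inner p q
      _ = -∑ p, ∑ q, W a p t q * h p q := by simp
      _ = -∑ k, ∑ l, W k a l t * h k l := by rw [SA1]
  have hA2 : ∑ b, ∑ p, ∑ u, ∑ q, W a b p u * h u q * (kd7 p t * kd7 q b)
      = ∑ k, ∑ l, W k a l t * h k l := by
    have col : (∑ b, ∑ p, ∑ u, ∑ q, W a b p u * h u q * (kd7 p t * kd7 q b))
        = ∑ b, ∑ u, W a b t u * h u b := by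
      simp [kd7, mul_ite, ite_mul, Finset.mul_sum]
    rw [col]; exact SA2
  have hB2 : ∑ b, ∑ p, ∑ u, ∑ q, W a b p u * h u q * (kd7 p b * kd7 q t) = 0 := by
    have col : (∑ b, ∑ p, ∑ u, ∑ q, W a b p u * h u q * (kd7 p b * kd7 q t))
        = ∑ b, ∑ u, W a b b u * h u t := by
      simp [kd7, mul_ite, ite_mul, Finset.mul_sum]
    rw [col]
    calc ∑ b, ∑ u, W a b b u * h u t = ∑ u, ∑ b, W a b b u * h u t := Finset.sum_comm
      _ = ∑ u, (∑ b, W a b b u) * h u t :=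
          Finset.sum_congr rfl fun u _ => (Finset.sum_mul _ _ _).symm
      _ = 0 := by simp [R2]
  have hC2 : ∑ b, ∑ p, ∑ u, ∑ q, W a b p u * h u q * ψ p q t b
      = -∑ k, ∑ l, W k a l t * h k l := by
    have r : ∑ b, ∑ p, ∑ u, ∑ q, W a b p u * h u q * ψ p q t b
        = ∑ u, ∑ q, ∑ b, ∑ p, W a b p u * h u q * ψ p q t b := by
      calc ∑ b, ∑ p, ∑ u, ∑ q, W a b p u * h u q * ψ p q t b
          = ∑ p, ∑ u, ∑ q, ∑ b, W a b p u * h u q * ψ p q t b := m4' _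
        _ = ∑ u, ∑ q, ∑ b, ∑ p, W a b p u * h u q * ψ p q t b := m4' _
    rw [r]
    have inner : ∀ u q, ∑ b, ∑ p, W a b p u * h u q * ψ p q t b
        = -(W a u t q * h u q) := by
      intro u q
      calc ∑ b, ∑ p, W a b p u * h u q * ψ p q t b
          = ∑ b, ∑ p, h u q * (W a b p u * ψ p q t b) := csum2' fun b p => by ring
        _ = h u q * ∑ b, ∑ p, W a b p u * ψ p q t b := by simp [Finset.mul_sum]
        _ = -(W a u t q * h u q) := by rw [LemB a u t q]; ring
    calc ∑ u, ∑ q, ∑ b, ∑ p, W a b p u * h u q * ψ p q t b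
        = ∑ u, ∑ q, -(W a u t q * h u q) := csum2' fun u q => inner u q
      _ = -∑ u, ∑ q, W a u t q * h u q := by simp
      _ = -∑ k, ∑ l, W k a l t * h k l := by rw [SA1]
  -- 14-type contractions of W with φ
  have F3 : ∀ p u, ∑ b, ∑ c, W b c p u * φ t b c = 0 := by
    intro p u
    calc ∑ b, ∑ c, W b c p u * φ t b c
        = ∑ b, ∑ c, W p u b c * φ b c t := csum2' fun b c => by
          rw [hW3 b c p u, cyc t b c]
      _ = 0 := hW14φ p u t
  -- the seven pieces
  have hP1 : (∑ b, ∑ c, ∑ p, ∑ u, ∑ q, (W a b p u * (h p q * φ q u c)) * φ t b c)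
      = 2 * ∑ k, ∑ l, W k a l t * h k l := by
    calc ∑ b, ∑ c, ∑ p, ∑ u, ∑ q, (W a b p u * (h p q * φ q u c)) * φ t b c
        = ∑ b, ∑ p, ∑ u, ∑ q, ∑ c, (W a b p u * (h p q * φ q u c)) * φ t b c :=
          Finset.sum_congr rfl fun b _ => m4' _
      _ = ∑ b, ∑ p, ∑ u, ∑ q, W a b p u * h p q
            * (kd7 q t * kd7 u b - kd7 q b * kd7 u t - ψ q u t b) :=
          csum4' fun b p u q => by
            calc ∑ c, (W a b p u * (h p q * φ q u c)) * φ t b c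
                = ∑ c, W a b p u * h p q * (φ q u c * φ t b c) :=
                  Finset.sum_congr rfl fun c _ => by ring
              _ = W a b p u * h p q * ∑ c, φ q u c * φ t b c := (Finset.mul_sum _ _ _).symm
              _ = _ := by rw [hφφ q u t b]
      _ = (∑ b, ∑ p, ∑ u, ∑ q, W a b p u * h p q * (kd7 q t * kd7 u b))
          - (∑ b, ∑ p, ∑ u, ∑ q, W a b p u * h p q * (kd7 q b * kd7 u t))
          - (∑ b, ∑ p, ∑ u, ∑ q, W a b p u * h p q * ψ q u t b) := by
          simp [mul_sub, Finset.sum_sub_distrib]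
      _ = 2 * ∑ k, ∑ l, W k a l t * h k l := by rw [hA, hB, hC]; ring
  have hP2 : (∑ b, ∑ c, ∑ p, ∑ u, ∑ q, (W a b p u * (h u q * φ p q c)) * φ t b c)
      = 2 * ∑ k, ∑ l, W k a l t * h k l := by
    calc ∑ b, ∑ c, ∑ p, ∑ u, ∑ q, (W a b p u * (h u q * φ p q c)) * φ t b c
        = ∑ b, ∑ p, ∑ u, ∑ q, ∑ c, (W a b p u * (h u q * φ p q c)) * φ t b c :=
          Finset.sum_congr rfl fun b _ => m4' _
      _ = ∑ b, ∑ p, ∑ u, ∑ q, W a b p u * h u q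
            * (kd7 p t * kd7 q b - kd7 p b * kd7 q t - ψ p q t b) :=
          csum4' fun b p u q => by
            calc ∑ c, (W a b p u * (h u q * φ p q c)) * φ t b c
                = ∑ c, W a b p u * h u q * (φ p q c * φ t b c) :=
                  Finset.sum_congr rfl fun c _ => by ring
              _ = W a b p u * h u q * ∑ c, φ p q c * φ t b c := (Finset.mul_sum _ _ _).symm
              _ = _ := by rw [hφφ p q t b]
      _ = (∑ b, ∑ p, ∑ u, ∑ q, W a b p u * h u q * (kd7 p t * kd7 q b))
          - (∑ b, ∑ p, ∑ u, ∑ q, W a b p u * h u q * (kd7 p b * kd7 q t))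
          - (∑ b, ∑ p, ∑ u, ∑ q, W a b p u * h u q * ψ p q t b) := by
          simp [mul_sub, Finset.sum_sub_distrib]
      _ = 2 * ∑ k, ∑ l, W k a l t * h k l := by rw [hA2, hB2, hC2]; ring
  have hP3 : (∑ b, ∑ c, ∑ p, ∑ u, ∑ q, (W a b p u * (h c q * φ p u q)) * φ t b c) = 0 := by
    have inner : ∀ b c, ∑ p, ∑ u, ∑ q, (W a b p u * (h c q * φ p u q)) * φ t b c = 0 := by
      intro b c
      calc ∑ p, ∑ u, ∑ q, (W a b p u * (h c q * φ p u q)) * φ t b c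
          = ∑ u, ∑ q, ∑ p, (W a b p u * (h c q * φ p u q)) * φ t b c := m3' _
        _ = ∑ q, ∑ p, ∑ u, (W a b p u * (h c q * φ p u q)) * φ t b c := m3' _
        _ = ∑ q, (h c q * φ t b c) * ∑ p, ∑ u, W a b p u * φ p u q := by
            refine Finset.sum_congr rfl fun q _ => ?_
            calc ∑ p, ∑ u, (W a b p u * (h c q * φ p u q)) * φ t b c
                = ∑ p, ∑ u, (h c q * φ t b c) * (W a b p u * φ p u q) :=
                  csum2' fun p u => by ring
              _ = (h c q * φ t b c) * ∑ p, ∑ u, W a b p u * φ p u q := by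
                  simp [Finset.mul_sum]
        _ = 0 := Finset.sum_eq_zero fun q _ => by rw [hW14φ a b q]; ring
    calc ∑ b, ∑ c, ∑ p, ∑ u, ∑ q, (W a b p u * (h c q * φ p u q)) * φ t b c
        = ∑ b, ∑ c, (0:ℝ) := csum2' fun b c => inner b c
      _ = 0 := by simp
  have hP4 : (∑ b, ∑ c, ∑ p, ∑ u, ∑ q, (W a c p u * (h p q * φ q b u)) * φ t b c)
      = 2 * ∑ k, ∑ l, W k a l t * h k l := by
    calc ∑ b, ∑ c, ∑ p, ∑ u, ∑ q, (W a c p u * (h p q * φ q b u)) * φ t b c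
        = ∑ c, ∑ p, ∑ u, ∑ q, ∑ b, (W a c p u * (h p q * φ q b u)) * φ t b c := m5' _
      _ = ∑ c, ∑ p, ∑ u, ∑ q, W a c p u * h p q
            * (kd7 q t * kd7 u c - kd7 q c * kd7 u t - ψ q u t c) :=
          csum4' fun c p u q => by
            calc ∑ b, (W a c p u * (h p q * φ q b u)) * φ t b c
                = ∑ b, W a c p u * h p q * (φ q u b * φ t c b) :=
                  Finset.sum_congr rfl fun b _ => by rw [hφ2 q b u, hφ2 t b c]; ring
              _ = W a c p u * h p q * ∑ b, φ q u b * φ t c b := (Finset.mul_sum _ _ _).symm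
              _ = _ := by rw [hφφ q u t c]
      _ = (∑ c, ∑ p, ∑ u, ∑ q, W a c p u * h p q * (kd7 q t * kd7 u c))
          - (∑ c, ∑ p, ∑ u, ∑ q, W a c p u * h p q * (kd7 q c * kd7 u t))
          - (∑ c, ∑ p, ∑ u, ∑ q, W a c p u * h p q * ψ q u t c) := by
          simp [mul_sub, Finset.sum_sub_distrib]
      _ = 2 * ∑ k, ∑ l, W k a l t * h k l := by rw [hA, hB, hC]; ring
  have hP5 : (∑ b, ∑ c, ∑ p, ∑ u, ∑ q, (W a c p u * (h b q * φ p q u)) * φ t b c) = 0 := by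
    have inner : ∀ b c, ∑ p, ∑ u, ∑ q, (W a c p u * (h b q * φ p q u)) * φ t b c = 0 := by
      intro b c
      have z : ∀ q : Fin 7, ∑ p, ∑ u, W a c p u * φ p q u = 0 := by
        intro q
        calc ∑ p, ∑ u, W a c p u * φ p q u
            = ∑ p, ∑ u, -(W a c p u * φ p u q) := csum2' fun p u => by
              rw [hφ2 p q u]; ring
          _ = -∑ p, ∑ u, W a c p u * φ p u q := by simp
          _ = 0 := by rw [hW14φ a c q]; ring
      calc ∑ p, ∑ u, ∑ q, (W a c p u * (h b q * φ p q u)) * φ t b c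
          = ∑ u, ∑ q, ∑ p, (W a c p u * (h b q * φ p q u)) * φ t b c := m3' _
        _ = ∑ q, ∑ p, ∑ u, (W a c p u * (h b q * φ p q u)) * φ t b c := m3' _
        _ = ∑ q, (h b q * φ t b c) * ∑ p, ∑ u, W a c p u * φ p q u := by
            refine Finset.sum_congr rfl fun q _ => ?_
            calc ∑ p, ∑ u, (W a c p u * (h b q * φ p q u)) * φ t b c
                = ∑ p, ∑ u, (h b q * φ t b c) * (W a c p u * φ p q u) :=
                  csum2' fun p u => by ring
              _ = (h b q * φ t b c) * ∑ p, ∑ u, W a c p u * φ p q u := by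
                  simp [Finset.mul_sum]
        _ = 0 := Finset.sum_eq_zero fun q _ => by rw [z q]; ring
    calc ∑ b, ∑ c, ∑ p, ∑ u, ∑ q, (W a c p u * (h b q * φ p q u)) * φ t b c
        = ∑ b, ∑ c, (0:ℝ) := csum2' fun b c => inner b c
      _ = 0 := by simp
  have hP6 : (∑ b, ∑ c, ∑ p, ∑ u, ∑ q, (W a c p u * (h u q * φ p b q)) * φ t b c)
      = 2 * ∑ k, ∑ l, W k a l t * h k l := by
    calc ∑ b, ∑ c, ∑ p, ∑ u, ∑ q, (W a c p u * (h u q * φ p b q)) * φ t b c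
        = ∑ c, ∑ p, ∑ u, ∑ q, ∑ b, (W a c p u * (h u q * φ p b q)) * φ t b c := m5' _
      _ = ∑ c, ∑ p, ∑ u, ∑ q, W a c p u * h u q
            * (kd7 p t * kd7 q c - kd7 p c * kd7 q t - ψ p q t c) :=
          csum4' fun c p u q => by
            calc ∑ b, (W a c p u * (h u q * φ p b q)) * φ t b c
                = ∑ b, W a c p u * h u q * (φ p q b * φ t c b) :=
                  Finset.sum_congr rfl fun b _ => by rw [hφ2 p b q, hφ2 t b c]; ring
              _ = W a c p u * h u q * ∑ b, φ p q b * φ t c b := (Finset.mul_sum _ _ _).symm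
              _ = _ := by rw [hφφ p q t c]
      _ = (∑ c, ∑ p, ∑ u, ∑ q, W a c p u * h u q * (kd7 p t * kd7 q c))
          - (∑ c, ∑ p, ∑ u, ∑ q, W a c p u * h u q * (kd7 p c * kd7 q t))
          - (∑ c, ∑ p, ∑ u, ∑ q, W a c p u * h u q * ψ p q t c) := by
          simp [mul_sub, Finset.sum_sub_distrib]
      _ = 2 * ∑ k, ∑ l, W k a l t * h k l := by rw [hA2, hB2, hC2]; ring
  have hP7 : (∑ b, ∑ c, ∑ p, ∑ u, (W b c p u * β a p u) * φ t b c) = 0 := by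
    have r : ∑ b, ∑ c, ∑ p, ∑ u, (W b c p u * β a p u) * φ t b c
        = ∑ p, ∑ u, ∑ b, ∑ c, (W b c p u * β a p u) * φ t b c := by
      calc ∑ b, ∑ c, ∑ p, ∑ u, (W b c p u * β a p u) * φ t b c
          = ∑ c, ∑ p, ∑ u, ∑ b, (W b c p u * β a p u) * φ t b c := m4' _
        _ = ∑ p, ∑ u, ∑ b, ∑ c, (W b c p u * β a p u) * φ t b c := m4' _
    rw [r]
    have inner : ∀ p u, ∑ b, ∑ c, (W b c p u * β a p u) * φ t b c = 0 := by
      intro p u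
      calc ∑ b, ∑ c, (W b c p u * β a p u) * φ t b c
          = ∑ b, ∑ c, β a p u * (W b c p u * φ t b c) := csum2' fun b c => by ring
        _ = β a p u * ∑ b, ∑ c, W b c p u * φ t b c := by simp [Finset.mul_sum]
        _ = 0 := by rw [F3 p u]; ring
    calc ∑ p, ∑ u, ∑ b, ∑ c, (W b c p u * β a p u) * φ t b c
        = ∑ p, ∑ u, (0:ℝ) := csum2' fun p u => inner p u
      _ = 0 := by simp
  -- expansion of the integrand
  have expand : ∀ b c, γ a b c * φ t b c =
      (∑ p, ∑ u, ∑ q,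
        ((W a b p u * (h p q * φ q u c)) * φ t b c
        + (W a b p u * (h u q * φ p q c)) * φ t b c
        + (W a b p u * (h c q * φ p u q)) * φ t b c
        + (W a c p u * (h p q * φ q b u)) * φ t b c
        + (W a c p u * (h b q * φ p q u)) * φ t b c
        + (W a c p u * (h u q * φ p b q)) * φ t b c))
      + ∑ p, ∑ u, (W b c p u * β a p u) * φ t b c := by
    intro b c
    rw [hγ a b c, Finset.sum_mul, ← Finset.sum_add_distrib]
    refine Finset.sum_congr rfl fun p _ => ?_
    rw [Finset.sum_mul, ← Finset.sum_add_distrib]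
    refine Finset.sum_congr rfl fun u _ => ?_
    rw [hβ p u c, hβ p b u, Finset.mul_sum, Finset.mul_sum, add_mul, add_mul,
      Finset.sum_mul, Finset.sum_mul, ← Finset.sum_add_distrib]
    congr 1
    exact Finset.sum_congr rfl fun q _ => by ring
  calc ∑ b, ∑ c, γ a b c * φ t b c
      = ∑ b, ∑ c,
        ((∑ p, ∑ u, ∑ q,
          ((W a b p u * (h p q * φ q u c)) * φ t b c
          + (W a b p u * (h u q * φ p q c)) * φ t b c
          + (W a b p u * (h c q * φ p u q)) * φ t b c
          + (W a c p u * (h p q * φ q b u)) * φ t b c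
          + (W a c p u * (h b q * φ p q u)) * φ t b c
          + (W a c p u * (h u q * φ p b q)) * φ t b c))
        + ∑ p, ∑ u, (W b c p u * β a p u) * φ t b c) := csum2' fun b c => expand b c
    _ = (∑ b, ∑ c, ∑ p, ∑ u, ∑ q, (W a b p u * (h p q * φ q u c)) * φ t b c)
        + (∑ b, ∑ c, ∑ p, ∑ u, ∑ q, (W a b p u * (h u q * φ p q c)) * φ t b c)
        + (∑ b, ∑ c, ∑ p, ∑ u, ∑ q, (W a b p u * (h c q * φ p u q)) * φ t b c)
        + (∑ b, ∑ c, ∑ p, ∑ u, ∑ q, (W a c p u * (h p q * φ q b u)) * φ t b c)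
        + (∑ b, ∑ c, ∑ p, ∑ u, ∑ q, (W a c p u * (h b q * φ p q u)) * φ t b c)
        + (∑ b, ∑ c, ∑ p, ∑ u, ∑ q, (W a c p u * (h u q * φ p b q)) * φ t b c)
        + (∑ b, ∑ c, ∑ p, ∑ u, (W b c p u * β a p u) * φ t b c) := by
        simp only [Finset.sum_add_distrib]
    _ = 8 * ∑ k, ∑ l, W k a l t * h k l := by
        rw [hP1, hP2, hP3, hP4, hP5, hP6, hP7]; ring
end

section
/- On ℝ⁶, let (ω, ψ⁺, ψ⁻) satisfy the SU(3) contraction identities, and let W = (W_{ijkl}) be an algebraic curvature tensor that is Ricci-traceless (∑_k W_{kijk} = 0 for all i, j) and lies in Ω²₈ in each index pair: ∑_{k,l} W_{ijkl}ω_{kl} = 0, ∑_{k,l} W_{ijkl}ψ⁺_{klm} = 0, and (1/2)∑_{u,v} W_{ijuv}(⋆ω)_{uvkl} = −W_{ijkl} for all indices, where (⋆ω)_{ijkl} = ω_{ij}ω_{kl} + ω_{jk}ω_{il} + ω_{lj}ω_{ik}. Let h = (h_{ij}) be symmetric and anticommuting with ω (∑_p h_{ip}ω_{pj} = −∑_p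 ω_{ip}h_{pj} for all i, j), let β = h ⋄ ψ⁺, and define γ_{abc} = ∑_{p,u} (W_{abpu}β_{puc} + W_{acpu}β_{pbu} + W_{bcpu}β_{apu}) (the Weyl-curvature term of the Weitzenböck formula on 3-forms). Then ∑_{b,c} γ_{abc}ψ⁺_{tbc} = 8 (W̊h)_{at} for all a, t, where (W̊h)_{ij} = ∑_{k,l} W_{kilj}h_{kl}. -/
open scoped BigOperators

/-- Kronecker delta on `Fin 6`. -/
noncomputable def kd6 (i j : Fin 6) : ℝ := if i = j then 1 else 0

lemma sum_congr6 {f g : Fin 6 → ℝ} (h : ∀ x, f x = g x) :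
    ∑ x, f x = ∑ x, g x := Finset.sum_congr rfl fun x _ => h x

lemma sc2 {f g : Fin 6 → Fin 6 → ℝ} (h : ∀ x y, f x y = g x y) :
    ∑ x, ∑ y, f x y = ∑ x, ∑ y, g x y := sum_congr6 fun x => sum_congr6 (h x)

lemma sc3 {f g : Fin 6 → Fin 6 → Fin 6 → ℝ} (h : ∀ x y z, f x y z = g x y z) :
    ∑ x, ∑ y, ∑ z, f x y z = ∑ x, ∑ y, ∑ z, g x y z :=
  sum_congr6 fun x => sc2 (h x)

lemma sc4 {f g : Fin 6 → Fin 6 → Fin 6 → Fin 6 → ℝ}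
    (h : ∀ x y z w, f x y z w = g x y z w) :
    ∑ x, ∑ y, ∑ z, ∑ w, f x y z w = ∑ x, ∑ y, ∑ z, ∑ w, g x y z w :=
  sum_congr6 fun x => sc3 (h x)

section Aux

variable (ω : Fin 6 → Fin 6 → ℝ) (ψp : Fin 6 → Fin 6 → Fin 6 → ℝ)
  (W : Fin 6 → Fin 6 → Fin 6 → Fin 6 → ℝ) (h : Fin 6 → Fin 6 → ℝ)

lemma omsq (hω_skew : ∀ i j, ω i j = - ω j i)
    (hω_unit : ∀ i j, ∑ k, ω i k * ω j k = kd6 i j) (i j : Fin 6) :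
    ∑ x, ω i x * ω x j = - kd6 i j := by
  calc ∑ x, ω i x * ω x j = ∑ x, -(ω i x * ω j x) :=
        sum_congr6 fun x => by rw [hω_skew x j]; ring
    _ = -kd6 i j := by rw [Finset.sum_neg_distrib, hω_unit]

lemma ric2 (hW1 : ∀ i j p q, W i j p q = - W j i p q)
    (hW3 : ∀ i j p q, W i j p q = W p q i j)
    (hRic : ∀ i j, ∑ k, W k i j k = 0) (a p : Fin 6) :
    ∑ b, W a b p b = 0 := by
  have e : ∀ b, W a b p b = -(W b p a b) := fun b => by rw [hW3, hW1]
  simp only [e, Finset.sum_neg_distrib, hRic, neg_zero]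

lemma ric3 (hW3 : ∀ i j p q, W i j p q = W p q i j)
    (hRic : ∀ i j, ∑ k, W k i j k = 0) (a u : Fin 6) :
    ∑ b, W a b b u = 0 := by
  have e : ∀ b, W a b b u = W b u a b := fun b => hW3 _ _ _ _
  simp only [e, hRic]

lemma star_last (hω_skew : ∀ i j, ω i j = - ω j i)
    (hW2 : ∀ i j p q, W i j p q = - W i j q p)
    (hWω : ∀ i j, ∑ k, ∑ l, W i j k l * ω k l = 0)
    (hW8 : ∀ i j k l, (1 / 2 : ℝ) * (∑ u, ∑ v, W i j u v *
        (ω u v * ω k l + ω v k * ω u l + ω l v * ω u k)) = - W i j k l)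
    (i j k l : Fin 6) :
    ∑ u, ∑ v, W i j u v * ω u k * ω v l = W i j k l := by
  have h8 := hW8 i j k l
  set X := ∑ u, ∑ v, W i j u v * ω u k * ω v l with hX
  have S2 : (∑ u, ∑ v, W i j u v * (ω v k * ω u l)) = -X := by
    rw [Finset.sum_comm, hX, ← Finset.sum_neg_distrib]
    refine Finset.sum_congr rfl fun x _ => ?_
    rw [← Finset.sum_neg_distrib]
    refine Finset.sum_congr rfl fun y _ => ?_
    rw [hW2 i j y x]; ring
  have S3 : (∑ u, ∑ v, W i j u v * (ω l v * ω u k)) = -X := by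
    rw [hX, ← Finset.sum_neg_distrib]
    refine Finset.sum_congr rfl fun x _ => ?_
    rw [← Finset.sum_neg_distrib]
    refine Finset.sum_congr rfl fun y _ => ?_
    rw [hω_skew l y]; ring
  have S1 : (∑ u, ∑ v, W i j u v * (ω u v * ω k l)) = 0 := by
    have e : (∑ u, ∑ v, W i j u v * (ω u v * ω k l))
        = (∑ u, ∑ v, W i j u v * ω u v) * ω k l := by
      rw [Finset.sum_mul]
      refine Finset.sum_congr rfl fun x _ => ?_
      rw [Finset.sum_mul]
      refine Finset.sum_congr rfl fun y _ => ?_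
      ring
    rw [e, hWω, zero_mul]
  have split : ∑ u, ∑ v, W i j u v *
      (ω u v * ω k l + ω v k * ω u l + ω l v * ω u k)
      = (∑ u, ∑ v, W i j u v * (ω u v * ω k l))
        + (∑ u, ∑ v, W i j u v * (ω v k * ω u l))
        + (∑ u, ∑ v, W i j u v * (ω l v * ω u k)) := by
    simp only [mul_add, Finset.sum_add_distrib]
  rw [split, S1, S2, S3] at h8
  linarith

lemma m4 (hω_unit : ∀ i j, ∑ k, ω i k * ω j k = kd6 i j)
    (hstar : ∀ i j k l, ∑ u, ∑ v, W i j u v * ω u k * ω v l = W i j k l)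
    (i j k m : Fin 6) :
    ∑ l, W i j k l * ω m l = ∑ u, W i j u m * ω u k := by
  calc ∑ l, W i j k l * ω m l
      = ∑ l, (∑ u, ∑ v, W i j u v * ω u k * ω v l) * ω m l :=
        sum_congr6 fun l => by rw [hstar]
    _ = ∑ l, ∑ u, ∑ v, (W i j u v * ω u k) * (ω v l * ω m l) := by
        refine sum_congr6 fun l => ?_
        rw [Finset.sum_mul]
        refine sum_congr6 fun u => ?_
        rw [Finset.sum_mul]
        exact sum_congr6 fun v => by ring
    _ = ∑ u, ∑ l, ∑ v, (W i j u v * ω u k) * (ω v l * ω m l) := Finset.sum_comm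
    _ = ∑ u, ∑ v, ∑ l, (W i j u v * ω u k) * (ω v l * ω m l) :=
        sum_congr6 fun u => Finset.sum_comm
    _ = ∑ u, ∑ v, (W i j u v * ω u k) * kd6 v m := by
        refine sum_congr6 fun u => sum_congr6 fun v => ?_
        rw [← Finset.mul_sum, hω_unit]
    _ = ∑ u, W i j u m * ω u k := by
        refine sum_congr6 fun u => ?_
        simp [kd6]

lemma m3 (hω_unit : ∀ i j, ∑ k, ω i k * ω j k = kd6 i j)
    (hstar : ∀ i j k l, ∑ u, ∑ v, W i j u v * ω u k * ω v l = W i j k l)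
    (i j l m : Fin 6) :
    ∑ k, W i j k l * ω m k = ∑ v, W i j m v * ω v l := by
  calc ∑ k, W i j k l * ω m k
      = ∑ k, (∑ u, ∑ v, W i j u v * ω u k * ω v l) * ω m k :=
        sum_congr6 fun k => by rw [hstar]
    _ = ∑ k, ∑ u, ∑ v, (W i j u v * ω v l) * (ω u k * ω m k) := by
        refine sum_congr6 fun k => ?_
        rw [Finset.sum_mul]
        refine sum_congr6 fun u => ?_
        rw [Finset.sum_mul]
        exact sum_congr6 fun v => by ring
    _ = ∑ u, ∑ k, ∑ v, (W i j u v * ω v l) * (ω u k * ω m k) := Finset.sum_comm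
    _ = ∑ u, ∑ v, ∑ k, (W i j u v * ω v l) * (ω u k * ω m k) :=
        sum_congr6 fun u => Finset.sum_comm
    _ = ∑ u, ∑ v, (W i j u v * ω v l) * kd6 u m := by
        refine sum_congr6 fun u => sum_congr6 fun v => ?_
        rw [← Finset.mul_sum, hω_unit]
    _ = ∑ v, W i j m v * ω v l := by
        rw [Finset.sum_comm]
        refine sum_congr6 fun v => ?_
        simp [kd6]

lemma m4n (hω_skew : ∀ i j, ω i j = - ω j i)
    (hω_unit : ∀ i j, ∑ k, ω i k * ω j k = kd6 i j)
    (hstar : ∀ i j k l, ∑ u, ∑ v, W i j u v * ω u k * ω v l = W i j k l)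
    (i j p t : Fin 6) :
    ∑ u, W i j p u * ω u t = - ∑ x, W i j x t * ω x p := by
  calc ∑ u, W i j p u * ω u t = ∑ u, -(W i j p u * ω t u) :=
        sum_congr6 fun u => by rw [hω_skew u t]; ring
    _ = -∑ u, W i j p u * ω t u := by rw [Finset.sum_neg_distrib]
    _ = - ∑ x, W i j x t * ω x p := by rw [m4 ω W hω_unit hstar]

lemma m3n (hω_skew : ∀ i j, ω i j = - ω j i)
    (hω_unit : ∀ i j, ∑ k, ω i k * ω j k = kd6 i j)
    (hstar : ∀ i j k l, ∑ u, ∑ v, W i j u v * ω u k * ω v l = W i j k l)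
    (i j u t : Fin 6) :
    ∑ p, W i j p u * ω p t = - ∑ v, W i j t v * ω v u := by
  calc ∑ p, W i j p u * ω p t = ∑ p, -(W i j p u * ω t p) :=
        sum_congr6 fun p => by rw [hω_skew p t]; ring
    _ = -∑ p, W i j p u * ω t p := by rw [Finset.sum_neg_distrib]
    _ = - ∑ v, W i j t v * ω v u := by rw [m3 ω W hω_unit hstar]

lemma m2i (hω_unit : ∀ i j, ∑ k, ω i k * ω j k = kd6 i j)
    (hW3 : ∀ i j p q, W i j p q = W p q i j)
    (hstar : ∀ i j k l, ∑ u, ∑ v, W i j u v * ω u k * ω v l = W i j k l)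
    (i m k l : Fin 6) :
    ∑ j, W i j k l * ω m j = ∑ x, W x m k l * ω x i := by
  calc ∑ j, W i j k l * ω m j = ∑ j, W k l i j * ω m j :=
        sum_congr6 fun j => by rw [hW3 i j k l]
    _ = ∑ u, W k l u m * ω u i := m4 ω W hω_unit hstar k l i m
    _ = ∑ x, W x m k l * ω x i := sum_congr6 fun x => by rw [hW3 k l x m]

lemma SA1zero (hW1 : ∀ i j p q, W i j p q = - W j i p q)
    (hW3 : ∀ i j p q, W i j p q = W p q i j)
    (hRic : ∀ i j, ∑ k, W k i j k = 0) (a t : Fin 6) :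
    ∑ b, ∑ p, W a b p b * h p t = 0 := by
  rw [Finset.sum_comm]
  refine Finset.sum_eq_zero fun p _ => ?_
  rw [← Finset.sum_mul, ric2 W hW1 hW3 hRic, zero_mul]

lemma PB2zero (hW3 : ∀ i j p q, W i j p q = W p q i j)
    (hRic : ∀ i j, ∑ k, W k i j k = 0) (a t : Fin 6) :
    ∑ b, ∑ u, W a b b u * h u t = 0 := by
  rw [Finset.sum_comm]
  refine Finset.sum_eq_zero fun u _ => ?_
  rw [← Finset.sum_mul, ric3 W hW3 hRic, zero_mul]

lemma A3zero (hω_skew : ∀ i j, ω i j = - ω j i)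
    (hω_unit : ∀ i j, ∑ k, ω i k * ω j k = kd6 i j)
    (hW1 : ∀ i j p q, W i j p q = - W j i p q)
    (hW3 : ∀ i j p q, W i j p q = W p q i j)
    (hRic : ∀ i j, ∑ k, W k i j k = 0)
    (hstar : ∀ i j k l, ∑ u, ∑ v, W i j u v * ω u k * ω v l = W i j k l)
    (a t : Fin 6) :
    ∑ b, ∑ p, ∑ u, ∑ q, (W a b p u * h p q) * (ω q t * ω u b) = 0 := by
  calc ∑ b, ∑ p, ∑ u, ∑ q, (W a b p u * h p q) * (ω q t * ω u b)
      = ∑ b, ∑ p, ∑ u, (W a b p u * ω u b) * (∑ q, h p q * ω q t) := by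
        refine sc3 fun b p u => ?_
        rw [Finset.mul_sum]; exact sum_congr6 fun q => by ring
    _ = ∑ b, ∑ p, (-∑ x, W a b x b * ω x p) * (∑ q, h p q * ω q t) := by
        refine sc2 fun b p => ?_
        rw [← Finset.sum_mul, m4n ω W hω_skew hω_unit hstar a b p b]
    _ = ∑ b, ∑ p, ∑ x, -(W a b x b * (ω x p * (∑ q, h p q * ω q t))) := by
        refine sc2 fun b p => ?_
        rw [neg_mul, Finset.sum_mul, ← Finset.sum_neg_distrib]
        exact sum_congr6 fun x => by ring
    _ = ∑ p, ∑ b, ∑ x, -(W a b x b * (ω x p * (∑ q, h p q * ω q t))) :=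
        Finset.sum_comm
    _ = ∑ p, ∑ x, ∑ b, -(W a b x b * (ω x p * (∑ q, h p q * ω q t))) :=
        sum_congr6 fun p => Finset.sum_comm
    _ = 0 := by
        refine Finset.sum_eq_zero fun p _ => Finset.sum_eq_zero fun x _ => ?_
        rw [Finset.sum_neg_distrib, ← Finset.sum_mul,
          ric2 W hW1 hW3 hRic a x, zero_mul, neg_zero]

lemma A4core (hω_skew : ∀ i j, ω i j = - ω j i)
    (hω_unit : ∀ i j, ∑ k, ω i k * ω j k = kd6 i j)
    (hstar : ∀ i j k l, ∑ u, ∑ v, W i j u v * ω u k * ω v l = W i j k l)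
    (hanticomm : ∀ i j, ∑ p, h i p * ω p j = - ∑ p, ω i p * h p j)
    (a t : Fin 6) :
    ∑ b, ∑ p, ∑ u, ∑ q, (W a b p u * h p q) * (ω q b * ω u t)
      = -∑ b, ∑ p, W a b p t * h p b := by
  calc ∑ b, ∑ p, ∑ u, ∑ q, (W a b p u * h p q) * (ω q b * ω u t)
      = ∑ b, ∑ p, ∑ u, -((W a b p u * ω u t) * (∑ q, ω p q * h q b)) := by
        refine sc3 fun b p u => ?_
        calc ∑ q, (W a b p u * h p q) * (ω q b * ω u t)
            = (W a b p u * ω u t) * (∑ q, h p q * ω q b) := by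
              rw [Finset.mul_sum]; exact sum_congr6 fun q => by ring
          _ = -((W a b p u * ω u t) * (∑ q, ω p q * h q b)) := by
              rw [hanticomm p b]; ring
    _ = ∑ b, ∑ p, -((∑ u, W a b p u * ω u t) * (∑ q, ω p q * h q b)) := by
        refine sc2 fun b p => ?_
        rw [Finset.sum_neg_distrib, Finset.sum_mul]
    _ = ∑ b, ∑ p, ∑ x, ∑ q, (W a b x t * h q b) * (ω x p * ω p q) := by
        refine sc2 fun b p => ?_
        rw [m4n ω W hω_skew hω_unit hstar a b p t, neg_mul, neg_neg,
          Finset.sum_mul]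
        refine sum_congr6 fun x => ?_
        rw [Finset.mul_sum]
        exact sum_congr6 fun q => by ring
    _ = ∑ b, ∑ x, ∑ p, ∑ q, (W a b x t * h q b) * (ω x p * ω p q) :=
        sum_congr6 fun b => Finset.sum_comm
    _ = ∑ b, ∑ x, ∑ q, ∑ p, (W a b x t * h q b) * (ω x p * ω p q) :=
        sum_congr6 fun b => sum_congr6 fun x => Finset.sum_comm
    _ = ∑ b, ∑ x, ∑ q, (W a b x t * h q b) * (-kd6 x q) := by
        refine sc3 fun b x q => ?_
        rw [← Finset.mul_sum, omsq ω hω_skew hω_unit x q]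
    _ = -∑ b, ∑ p, W a b p t * h p b := by
        simp [kd6, Finset.sum_neg_distrib]

lemma B3core (hω_skew : ∀ i j, ω i j = - ω j i)
    (hω_unit : ∀ i j, ∑ k, ω i k * ω j k = kd6 i j)
    (hstar : ∀ i j k l, ∑ u, ∑ v, W i j u v * ω u k * ω v l = W i j k l)
    (hanticomm : ∀ i j, ∑ p, h i p * ω p j = - ∑ p, ω i p * h p j)
    (a t : Fin 6) :
    ∑ b, ∑ p, ∑ u, ∑ q, (W a b p u * h u q) * (ω p t * ω q b)
      = -∑ b, ∑ u, W a b t u * h u b := by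
  calc ∑ b, ∑ p, ∑ u, ∑ q, (W a b p u * h u q) * (ω p t * ω q b)
      = ∑ b, ∑ p, ∑ u, -((W a b p u * ω p t) * (∑ q, ω u q * h q b)) := by
        refine sc3 fun b p u => ?_
        calc ∑ q, (W a b p u * h u q) * (ω p t * ω q b)
            = (W a b p u * ω p t) * (∑ q, h u q * ω q b) := by
              rw [Finset.mul_sum]; exact sum_congr6 fun q => by ring
          _ = -((W a b p u * ω p t) * (∑ q, ω u q * h q b)) := by
              rw [hanticomm u b]; ring
    _ = ∑ b, ∑ u, ∑ p, -((W a b p u * ω p t) * (∑ q, ω u q * h q b)) :=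
        sum_congr6 fun b => Finset.sum_comm
    _ = ∑ b, ∑ u, ∑ v, ∑ q, (W a b t v * h q b) * (ω v u * ω u q) := by
        refine sc2 fun b u => ?_
        rw [Finset.sum_neg_distrib, ← Finset.sum_mul,
          m3n ω W hω_skew hω_unit hstar a b u t, neg_mul, neg_neg,
          Finset.sum_mul]
        refine sum_congr6 fun v => ?_
        rw [Finset.mul_sum]
        exact sum_congr6 fun q => by ring
    _ = ∑ b, ∑ v, ∑ u, ∑ q, (W a b t v * h q b) * (ω v u * ω u q) :=
        sum_congr6 fun b => Finset.sum_comm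
    _ = ∑ b, ∑ v, ∑ q, ∑ u, (W a b t v * h q b) * (ω v u * ω u q) :=
        sum_congr6 fun b => sum_congr6 fun v => Finset.sum_comm
    _ = ∑ b, ∑ v, ∑ q, (W a b t v * h q b) * (-kd6 v q) := by
        refine sc3 fun b v q => ?_
        rw [← Finset.mul_sum, omsq ω hω_skew hω_unit v q]
    _ = -∑ b, ∑ u, W a b t u * h u b := by
        simp [kd6, Finset.sum_neg_distrib]

lemma B4core (hω_unit : ∀ i j, ∑ k, ω i k * ω j k = kd6 i j)
    (hW3 : ∀ i j p q, W i j p q = W p q i j)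
    (hRic : ∀ i j, ∑ k, W k i j k = 0)
    (hstar : ∀ i j k l, ∑ u, ∑ v, W i j u v * ω u k * ω v l = W i j k l)
    (a t : Fin 6) :
    ∑ b, ∑ p, ∑ u, ∑ q, (W a b p u * h u q) * (ω p b * ω q t) = 0 := by
  calc ∑ b, ∑ p, ∑ u, ∑ q, (W a b p u * h u q) * (ω p b * ω q t)
      = ∑ p, ∑ b, ∑ u, ∑ q, (W a b p u * h u q) * (ω p b * ω q t) :=
        Finset.sum_comm
    _ = ∑ p, ∑ u, ∑ b, ∑ q, (W a b p u * h u q) * (ω p b * ω q t) :=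
        sum_congr6 fun p => Finset.sum_comm
    _ = ∑ p, ∑ u, ∑ q, ∑ b, (W a b p u * h u q) * (ω p b * ω q t) :=
        sum_congr6 fun p => sum_congr6 fun u => Finset.sum_comm
    _ = ∑ p, ∑ u, ∑ q, ∑ x, (W x p p u) * (ω x a * (h u q * ω q t)) := by
        refine sc3 fun p u q => ?_
        calc ∑ b, (W a b p u * h u q) * (ω p b * ω q t)
            = (∑ b, W a b p u * ω p b) * (h u q * ω q t) := by
              rw [Finset.sum_mul]; exact sum_congr6 fun b => by ring
          _ = (∑ x, W x p p u * ω x a) * (h u q * ω q t) := by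
              rw [m2i ω W hω_unit hW3 hstar a p p u]
          _ = ∑ x, (W x p p u) * (ω x a * (h u q * ω q t)) := by
              rw [Finset.sum_mul]; exact sum_congr6 fun x => by ring
    _ = ∑ u, ∑ p, ∑ q, ∑ x, (W x p p u) * (ω x a * (h u q * ω q t)) :=
        Finset.sum_comm
    _ = ∑ u, ∑ q, ∑ p, ∑ x, (W x p p u) * (ω x a * (h u q * ω q t)) :=
        sum_congr6 fun u => Finset.sum_comm
    _ = ∑ u, ∑ q, ∑ x, ∑ p, (W x p p u) * (ω x a * (h u q * ω q t)) :=
        sum_congr6 fun u => sum_congr6 fun q => Finset.sum_comm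
    _ = 0 := by
        refine Finset.sum_eq_zero fun u _ => Finset.sum_eq_zero fun q _ =>
          Finset.sum_eq_zero fun x _ => ?_
        rw [← Finset.sum_mul, ric3 W hW3 hRic x u, zero_mul]

lemma finalid (hW1 : ∀ i j p q, W i j p q = - W j i p q)
    (hW2 : ∀ i j p q, W i j p q = - W i j q p)
    (hW3 : ∀ i j p q, W i j p q = W p q i j)
    (hBianchi : ∀ i j p q, W i j p q + W p i j q + W j p i q = 0)
    (hsymm : ∀ i j, h i j = h j i) (a t : Fin 6) :
    ∑ b, ∑ u, W a b t u * h u b = ∑ k, ∑ l, W k a l t * h k l := by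
  have S0 : ∑ b, ∑ u, W t a b u * h u b = 0 := by
    have e : ∑ b, ∑ u, W t a b u * h u b = -∑ b, ∑ u, W t a b u * h u b := by
      calc ∑ b, ∑ u, W t a b u * h u b
          = ∑ u, ∑ b, W t a b u * h u b := Finset.sum_comm
        _ = ∑ x, ∑ y, -(W t a x y * h y x) :=
            sc2 fun x y => by rw [hW2 t a y x, hsymm x y]; ring
        _ = -∑ b, ∑ u, W t a b u * h u b := by
            simp only [Finset.sum_neg_distrib]
    linarith
  have S1 : ∑ b, ∑ u, W b t a u * h u b = -∑ k, ∑ l, W k a l t * h k l := by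
    calc ∑ b, ∑ u, W b t a u * h u b
        = ∑ b, ∑ u, -(W u a b t * h u b) := sc2 fun b u => by
          rw [hW3 b t a u, hW1 a u b t]; ring
      _ = -∑ b, ∑ u, W u a b t * h u b := by simp only [Finset.sum_neg_distrib]
      _ = -∑ k, ∑ l, W k a l t * h k l := congrArg Neg.neg Finset.sum_comm
  calc ∑ b, ∑ u, W a b t u * h u b
      = ∑ b, ∑ u, (-(W t a b u * h u b) - W b t a u * h u b) :=
        sc2 fun b u => by linear_combination h u b * hBianchi a b t u
    _ = -(∑ b, ∑ u, W t a b u * h u b) - ∑ b, ∑ u, W b t a u * h u b := by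
        simp only [Finset.sum_sub_distrib, Finset.sum_neg_distrib]
    _ = ∑ k, ∑ l, W k a l t * h k l := by rw [S0, S1]; ring

lemma P1lem (hω_skew : ∀ i j, ω i j = - ω j i)
    (hω_unit : ∀ i j, ∑ k, ω i k * ω j k = kd6 i j)
    (hψpψp : ∀ i j a b, ∑ k, ψp i j k * ψp a b k =
      kd6 i a * kd6 j b - kd6 i b * kd6 j a - ω i a * ω j b + ω i b * ω j a)
    (hW1 : ∀ i j p q, W i j p q = - W j i p q)
    (hW3 : ∀ i j p q, W i j p q = W p q i j)
    (hRic : ∀ i j, ∑ k, W k i j k = 0)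
    (hstar : ∀ i j k l, ∑ u, ∑ v, W i j u v * ω u k * ω v l = W i j k l)
    (hanticomm : ∀ i j, ∑ p, h i p * ω p j = - ∑ p, ω i p * h p j)
    (a t : Fin 6) :
    ∑ b, ∑ c, ∑ p, ∑ u, ∑ q, W a b p u * (h p q * ψp q u c) * ψp t b c
      = -2 * ∑ b, ∑ p, W a b p t * h p b := by
  calc ∑ b, ∑ c, ∑ p, ∑ u, ∑ q, W a b p u * (h p q * ψp q u c) * ψp t b c
      = ∑ b, ∑ p, ∑ c, ∑ u, ∑ q, W a b p u * (h p q * ψp q u c) * ψp t b c :=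
        sum_congr6 fun b => Finset.sum_comm
    _ = ∑ b, ∑ p, ∑ u, ∑ c, ∑ q, W a b p u * (h p q * ψp q u c) * ψp t b c :=
        sum_congr6 fun b => sum_congr6 fun p => Finset.sum_comm
    _ = ∑ b, ∑ p, ∑ u, ∑ q, ∑ c, W a b p u * (h p q * ψp q u c) * ψp t b c :=
        sum_congr6 fun b => sum_congr6 fun p => sum_congr6 fun u =>
          Finset.sum_comm
    _ = ∑ b, ∑ p, ∑ u, ∑ q, (W a b p u * h p q) *
          (kd6 q t * kd6 u b - kd6 q b * kd6 u t - ω q t * ω u b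
            + ω q b * ω u t) := by
        refine sc4 fun b p u q => ?_
        rw [show (∑ c, W a b p u * (h p q * ψp q u c) * ψp t b c)
            = (W a b p u * h p q) * ∑ c, ψp q u c * ψp t b c by
          rw [Finset.mul_sum]; exact sum_congr6 fun c => by ring]
        rw [hψpψp q u t b]
    _ = ((∑ b, ∑ p, ∑ u, ∑ q, (W a b p u * h p q) * (kd6 q t * kd6 u b))
          - ∑ b, ∑ p, ∑ u, ∑ q, (W a b p u * h p q) * (kd6 q b * kd6 u t))
          - (∑ b, ∑ p, ∑ u, ∑ q, (W a b p u * h p q) * (ω q t * ω u b))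
          + ∑ b, ∑ p, ∑ u, ∑ q, (W a b p u * h p q) * (ω q b * ω u t) := by
        simp only [mul_sub, mul_add, Finset.sum_sub_distrib,
          Finset.sum_add_distrib]
    _ = -2 * ∑ b, ∑ p, W a b p t * h p b := by
        have e1 : ∑ b, ∑ p, ∑ u, ∑ q, (W a b p u * h p q) * (kd6 q t * kd6 u b)
            = ∑ b, ∑ p, W a b p b * h p t := by
          refine sc2 fun b p => ?_
          simp [kd6, Finset.mul_sum, mul_ite, ite_mul, Finset.sum_ite_eq,
            Finset.sum_ite_eq', mul_comm, mul_left_comm]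
        have e2 : ∑ b, ∑ p, ∑ u, ∑ q, (W a b p u * h p q) * (kd6 q b * kd6 u t)
            = ∑ b, ∑ p, W a b p t * h p b := by
          refine sc2 fun b p => ?_
          simp [kd6, Finset.mul_sum, mul_ite, ite_mul, Finset.sum_ite_eq,
            Finset.sum_ite_eq', mul_comm, mul_left_comm]
        rw [e1, e2, SA1zero W h hW1 hW3 hRic a t,
          A3zero ω W h hω_skew hω_unit hW1 hW3 hRic hstar a t,
          A4core ω W h hω_skew hω_unit hstar hanticomm a t]
        ring

lemma P2lem (hω_skew : ∀ i j, ω i j = - ω j i)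
    (hω_unit : ∀ i j, ∑ k, ω i k * ω j k = kd6 i j)
    (hψpψp : ∀ i j a b, ∑ k, ψp i j k * ψp a b k =
      kd6 i a * kd6 j b - kd6 i b * kd6 j a - ω i a * ω j b + ω i b * ω j a)
    (hW3 : ∀ i j p q, W i j p q = W p q i j)
    (hRic : ∀ i j, ∑ k, W k i j k = 0)
    (hstar : ∀ i j k l, ∑ u, ∑ v, W i j u v * ω u k * ω v l = W i j k l)
    (hanticomm : ∀ i j, ∑ p, h i p * ω p j = - ∑ p, ω i p * h p j)
    (a t : Fin 6) :
    ∑ b, ∑ c, ∑ p, ∑ u, ∑ q, W a b p u * (h u q * ψp p q c) * ψp t b c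
      = 2 * ∑ b, ∑ u, W a b t u * h u b := by
  calc ∑ b, ∑ c, ∑ p, ∑ u, ∑ q, W a b p u * (h u q * ψp p q c) * ψp t b c
      = ∑ b, ∑ p, ∑ c, ∑ u, ∑ q, W a b p u * (h u q * ψp p q c) * ψp t b c :=
        sum_congr6 fun b => Finset.sum_comm
    _ = ∑ b, ∑ p, ∑ u, ∑ c, ∑ q, W a b p u * (h u q * ψp p q c) * ψp t b c :=
        sum_congr6 fun b => sum_congr6 fun p => Finset.sum_comm
    _ = ∑ b, ∑ p, ∑ u, ∑ q, ∑ c, W a b p u * (h u q * ψp p q c) * ψp t b c :=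
        sum_congr6 fun b => sum_congr6 fun p => sum_congr6 fun u =>
          Finset.sum_comm
    _ = ∑ b, ∑ p, ∑ u, ∑ q, (W a b p u * h u q) *
          (kd6 p t * kd6 q b - kd6 p b * kd6 q t - ω p t * ω q b
            + ω p b * ω q t) := by
        refine sc4 fun b p u q => ?_
        rw [show (∑ c, W a b p u * (h u q * ψp p q c) * ψp t b c)
            = (W a b p u * h u q) * ∑ c, ψp p q c * ψp t b c by
          rw [Finset.mul_sum]; exact sum_congr6 fun c => by ring]
        rw [hψpψp p q t b]
    _ = ((∑ b, ∑ p, ∑ u, ∑ q, (W a b p u * h u q) * (kd6 p t * kd6 q b))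
          - ∑ b, ∑ p, ∑ u, ∑ q, (W a b p u * h u q) * (kd6 p b * kd6 q t))
          - (∑ b, ∑ p, ∑ u, ∑ q, (W a b p u * h u q) * (ω p t * ω q b))
          + ∑ b, ∑ p, ∑ u, ∑ q, (W a b p u * h u q) * (ω p b * ω q t) := by
        simp only [mul_sub, mul_add, Finset.sum_sub_distrib,
          Finset.sum_add_distrib]
    _ = 2 * ∑ b, ∑ u, W a b t u * h u b := by
        have e1 : ∑ b, ∑ p, ∑ u, ∑ q, (W a b p u * h u q) * (kd6 p t * kd6 q b)
            = ∑ b, ∑ u, W a b t u * h u b := by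
          refine sum_congr6 fun b => ?_
          simp [kd6, Finset.mul_sum, mul_ite, ite_mul, Finset.sum_ite_eq,
            Finset.sum_ite_eq', mul_comm, mul_left_comm]
        have e2 : ∑ b, ∑ p, ∑ u, ∑ q, (W a b p u * h u q) * (kd6 p b * kd6 q t)
            = ∑ b, ∑ u, W a b b u * h u t := by
          refine sum_congr6 fun b => ?_
          simp [kd6, Finset.mul_sum, mul_ite, ite_mul, Finset.sum_ite_eq,
            Finset.sum_ite_eq', mul_comm, mul_left_comm]
        rw [e1, e2, PB2zero W h hW3 hRic a t,
          B3core ω W h hω_skew hω_unit hstar hanticomm a t,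
          B4core ω W h hω_unit hW3 hRic hstar a t]
        ring

lemma P3lem (hWψp : ∀ i j m, ∑ k, ∑ l, W i j k l * ψp k l m = 0)
    (a t : Fin 6) :
    ∑ b, ∑ c, ∑ p, ∑ u, ∑ q, W a b p u * (h c q * ψp p u q) * ψp t b c
      = 0 := by
  calc ∑ b, ∑ c, ∑ p, ∑ u, ∑ q, W a b p u * (h c q * ψp p u q) * ψp t b c
      = ∑ b, ∑ c, ∑ p, ∑ q, ∑ u, W a b p u * (h c q * ψp p u q) * ψp t b c :=
        sc3 fun b c p => Finset.sum_comm
    _ = ∑ b, ∑ c, ∑ q, ∑ p, ∑ u, W a b p u * (h c q * ψp p u q) * ψp t b c :=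
        sc2 fun b c => Finset.sum_comm
    _ = 0 := by
        refine Finset.sum_eq_zero fun b _ => Finset.sum_eq_zero fun c _ =>
          Finset.sum_eq_zero fun q _ => ?_
        calc ∑ p, ∑ u, W a b p u * (h c q * ψp p u q) * ψp t b c
            = ∑ p, (∑ u, W a b p u * ψp p u q) * (h c q * ψp t b c) := by
              refine sum_congr6 fun p => ?_
              rw [Finset.sum_mul]; exact sum_congr6 fun u => by ring
          _ = (∑ p, ∑ u, W a b p u * ψp p u q) * (h c q * ψp t b c) := by
              rw [Finset.sum_mul]
          _ = 0 := by rw [hWψp a b q, zero_mul]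

lemma P5lem (hψp2 : ∀ i j k, ψp i j k = - ψp i k j)
    (hWψp : ∀ i j m, ∑ k, ∑ l, W i j k l * ψp k l m = 0)
    (a t : Fin 6) :
    ∑ b, ∑ c, ∑ p, ∑ u, ∑ q, W a c p u * (h b q * ψp p q u) * ψp t b c
      = 0 := by
  calc ∑ b, ∑ c, ∑ p, ∑ u, ∑ q, W a c p u * (h b q * ψp p q u) * ψp t b c
      = ∑ b, ∑ c, ∑ p, ∑ q, ∑ u, W a c p u * (h b q * ψp p q u) * ψp t b c :=
        sc3 fun b c p => Finset.sum_comm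
    _ = ∑ b, ∑ c, ∑ q, ∑ p, ∑ u, W a c p u * (h b q * ψp p q u) * ψp t b c :=
        sc2 fun b c => Finset.sum_comm
    _ = 0 := by
        refine Finset.sum_eq_zero fun b _ => Finset.sum_eq_zero fun c _ =>
          Finset.sum_eq_zero fun q _ => ?_
        calc ∑ p, ∑ u, W a c p u * (h b q * ψp p q u) * ψp t b c
            = ∑ p, (∑ u, W a c p u * ψp p u q) * (-(h b q * ψp t b c)) := by
              refine sum_congr6 fun p => ?_
              rw [Finset.sum_mul]
              exact sum_congr6 fun u => by rw [hψp2 p q u]; ring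
          _ = (∑ p, ∑ u, W a c p u * ψp p u q) * (-(h b q * ψp t b c)) := by
              rw [Finset.sum_mul]
          _ = 0 := by rw [hWψp a c q, zero_mul]

lemma P4lem (hω_skew : ∀ i j, ω i j = - ω j i)
    (hω_unit : ∀ i j, ∑ k, ω i k * ω j k = kd6 i j)
    (hψp2 : ∀ i j k, ψp i j k = - ψp i k j)
    (hψpψp : ∀ i j a b, ∑ k, ψp i j k * ψp a b k =
      kd6 i a * kd6 j b - kd6 i b * kd6 j a - ω i a * ω j b + ω i b * ω j a)
    (hW1 : ∀ i j p q, W i j p q = - W j i p q)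
    (hW3 : ∀ i j p q, W i j p q = W p q i j)
    (hRic : ∀ i j, ∑ k, W k i j k = 0)
    (hstar : ∀ i j k l, ∑ u, ∑ v, W i j u v * ω u k * ω v l = W i j k l)
    (hanticomm : ∀ i j, ∑ p, h i p * ω p j = - ∑ p, ω i p * h p j)
    (a t : Fin 6) :
    ∑ b, ∑ c, ∑ p, ∑ u, ∑ q, W a c p u * (h p q * ψp q b u) * ψp t b c
      = -2 * ∑ b, ∑ p, W a b p t * h p b := by
  calc ∑ b, ∑ c, ∑ p, ∑ u, ∑ q, W a c p u * (h p q * ψp q b u) * ψp t b c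
      = ∑ c, ∑ b, ∑ p, ∑ u, ∑ q, W a c p u * (h p q * ψp q b u) * ψp t b c :=
        Finset.sum_comm
    _ = ∑ b, ∑ c, ∑ p, ∑ u, ∑ q,
          W a b p u * (h p q * ψp q u c) * ψp t b c := by
        refine sc2 fun x y => sc3 fun p u q => ?_
        rw [hψp2 q y u, hψp2 t y x]; ring
    _ = -2 * ∑ b, ∑ p, W a b p t * h p b :=
        P1lem ω ψp W h hω_skew hω_unit hψpψp hW1 hW3 hRic hstar hanticomm a t

lemma P6lem (hω_skew : ∀ i j, ω i j = - ω j i)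
    (hω_unit : ∀ i j, ∑ k, ω i k * ω j k = kd6 i j)
    (hψp2 : ∀ i j k, ψp i j k = - ψp i k j)
    (hψpψp : ∀ i j a b, ∑ k, ψp i j k * ψp a b k =
      kd6 i a * kd6 j b - kd6 i b * kd6 j a - ω i a * ω j b + ω i b * ω j a)
    (hW3 : ∀ i j p q, W i j p q = W p q i j)
    (hRic : ∀ i j, ∑ k, W k i j k = 0)
    (hstar : ∀ i j k l, ∑ u, ∑ v, W i j u v * ω u k * ω v l = W i j k l)
    (hanticomm : ∀ i j, ∑ p, h i p * ω p j = - ∑ p, ω i p * h p j)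
    (a t : Fin 6) :
    ∑ b, ∑ c, ∑ p, ∑ u, ∑ q, W a c p u * (h u q * ψp p b q) * ψp t b c
      = 2 * ∑ b, ∑ u, W a b t u * h u b := by
  calc ∑ b, ∑ c, ∑ p, ∑ u, ∑ q, W a c p u * (h u q * ψp p b q) * ψp t b c
      = ∑ c, ∑ b, ∑ p, ∑ u, ∑ q, W a c p u * (h u q * ψp p b q) * ψp t b c :=
        Finset.sum_comm
    _ = ∑ b, ∑ c, ∑ p, ∑ u, ∑ q,
          W a b p u * (h u q * ψp p q c) * ψp t b c := by
        refine sc2 fun x y => sc3 fun p u q => ?_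
        rw [hψp2 p y q, hψp2 t y x]; ring
    _ = 2 * ∑ b, ∑ u, W a b t u * h u b :=
        P2lem ω ψp W h hω_skew hω_unit hψpψp hW3 hRic hstar hanticomm a t

lemma T3zero (β : Fin 6 → Fin 6 → Fin 6 → ℝ)
    (hψp1 : ∀ i j k, ψp i j k = - ψp j i k)
    (hψp2 : ∀ i j k, ψp i j k = - ψp i k j)
    (hW3 : ∀ i j p q, W i j p q = W p q i j)
    (hWψp : ∀ i j m, ∑ k, ∑ l, W i j k l * ψp k l m = 0) (a t : Fin 6) :
    ∑ b, ∑ c, ∑ p, ∑ u, (W b c p u * β a p u) * ψp t b c = 0 := by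
  have cyc : ∀ i j k, ψp i j k = ψp j k i := fun i j k => by
    rw [hψp1 i j k, hψp2 j i k, neg_neg]
  calc ∑ b, ∑ c, ∑ p, ∑ u, (W b c p u * β a p u) * ψp t b c
      = ∑ b, ∑ p, ∑ c, ∑ u, (W b c p u * β a p u) * ψp t b c :=
        sum_congr6 fun b => Finset.sum_comm
    _ = ∑ p, ∑ b, ∑ c, ∑ u, (W b c p u * β a p u) * ψp t b c :=
        Finset.sum_comm
    _ = ∑ p, ∑ b, ∑ u, ∑ c, (W b c p u * β a p u) * ψp t b c :=
        sc2 fun p b => Finset.sum_comm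
    _ = ∑ p, ∑ u, ∑ b, ∑ c, (W b c p u * β a p u) * ψp t b c :=
        sum_congr6 fun p => Finset.sum_comm
    _ = 0 := by
        refine Finset.sum_eq_zero fun p _ => Finset.sum_eq_zero fun u _ => ?_
        calc ∑ b, ∑ c, (W b c p u * β a p u) * ψp t b c
            = ∑ b, ∑ c, (W p u b c * ψp b c t) * β a p u := by
              refine sc2 fun b c => ?_
              rw [hW3 b c p u, cyc t b c]; ring
          _ = (∑ b, ∑ c, W p u b c * ψp b c t) * β a p u := by
              rw [Finset.sum_mul]
              refine sum_congr6 fun b => ?_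
              rw [Finset.sum_mul]
          _ = 0 := by rw [hWψp p u t, zero_mul]

end Aux

theorem NK6_weyl_term_of_weitzenbock_on_3forms
    (ω : Fin 6 → Fin 6 → ℝ)
    (ψp ψm : Fin 6 → Fin 6 → Fin 6 → ℝ)
    (W : Fin 6 → Fin 6 → Fin 6 → Fin 6 → ℝ)
    (h : Fin 6 → Fin 6 → ℝ)
    (β γ : Fin 6 → Fin 6 → Fin 6 → ℝ)
    (hω_skew : ∀ i j, ω i j = - ω j i)
    (hω_unit : ∀ i j, ∑ k, ω i k * ω j k = kd6 i j)
    (hψp1 : ∀ i j k, ψp i j k = - ψp j i k)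
    (hψp2 : ∀ i j k, ψp i j k = - ψp i k j)
    (hψm1 : ∀ i j k, ψm i j k = - ψm j i k)
    (hψm2 : ∀ i j k, ψm i j k = - ψm i k j)
    (hψpω : ∀ i j a, ∑ k, ψp i j k * ω a k = - ψm i j a)
    (hψpψp : ∀ i j a b, ∑ k, ψp i j k * ψp a b k =
      kd6 i a * kd6 j b - kd6 i b * kd6 j a - ω i a * ω j b + ω i b * ω j a)
    (hW1 : ∀ i j p q, W i j p q = - W j i p q)
    (hW2 : ∀ i j p q, W i j p q = - W i j q p)
    (hW3 : ∀ i j p q, W i j p q = W p q i j)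
    (hBianchi : ∀ i j p q, W i j p q + W p i j q + W j p i q = 0)
    (hRic : ∀ i j, ∑ k, W k i j k = 0)
    (hWω : ∀ i j, ∑ k, ∑ l, W i j k l * ω k l = 0)
    (hWψp : ∀ i j m, ∑ k, ∑ l, W i j k l * ψp k l m = 0)
    (hW8 : ∀ i j k l, (1 / 2 : ℝ) * (∑ u, ∑ v, W i j u v *
        (ω u v * ω k l + ω v k * ω u l + ω l v * ω u k)) = - W i j k l)
    (hsymm : ∀ i j, h i j = h j i)
    (hanticomm : ∀ i j, ∑ p, h i p * ω p j = - ∑ p, ω i p * h p j)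
    (hβ : ∀ i j k, β i j k =
      ∑ p, (h i p * ψp p j k + h j p * ψp i p k + h k p * ψp i j p))
    (hγ : ∀ a b c, γ a b c = ∑ p, ∑ u,
      (W a b p u * β p u c + W a c p u * β p b u + W b c p u * β a p u)) :
    ∀ a t, ∑ b, ∑ c, γ a b c * ψp t b c = 8 * ∑ k, ∑ l, W k a l t * h k l := by
  intro a t
  have hstar : ∀ i j k l, ∑ u, ∑ v, W i j u v * ω u k * ω v l = W i j k l :=
    star_last ω W hω_skew hW2 hWω hW8
  have V2 : ∑ b, ∑ u, W a b t u * h u b = ∑ k, ∑ l, W k a l t * h k l :=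
    finalid W h hW1 hW2 hW3 hBianchi hsymm a t
  have V1 : ∑ b, ∑ p, W a b p t * h p b
      = -∑ k, ∑ l, W k a l t * h k l := by
    calc ∑ b, ∑ p, W a b p t * h p b
        = ∑ b, ∑ p, -(W a b t p * h p b) :=
          sc2 fun b p => by rw [hW2 a b p t]; ring
      _ = -∑ b, ∑ u, W a b t u * h u b := by
          simp only [Finset.sum_neg_distrib]
      _ = -∑ k, ∑ l, W k a l t * h k l := congrArg Neg.neg V2
  have E1 : ∑ b, ∑ c, ∑ p, ∑ u, (W a b p u * β p u c) * ψp t b c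
      = 4 * ∑ k, ∑ l, W k a l t * h k l := by
    calc ∑ b, ∑ c, ∑ p, ∑ u, (W a b p u * β p u c) * ψp t b c
        = ∑ b, ∑ c, ∑ p, ∑ u, ∑ q,
            (W a b p u * (h p q * ψp q u c) * ψp t b c
              + W a b p u * (h u q * ψp p q c) * ψp t b c
              + W a b p u * (h c q * ψp p u q) * ψp t b c) := by
          refine sc4 fun b c p u => ?_
          rw [hβ p u c, Finset.mul_sum, Finset.sum_mul]
          exact sum_congr6 fun q => by ring
      _ = (∑ b, ∑ c, ∑ p, ∑ u, ∑ q,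
              W a b p u * (h p q * ψp q u c) * ψp t b c)
            + (∑ b, ∑ c, ∑ p, ∑ u, ∑ q,
              W a b p u * (h u q * ψp p q c) * ψp t b c)
            + (∑ b, ∑ c, ∑ p, ∑ u, ∑ q,
              W a b p u * (h c q * ψp p u q) * ψp t b c) := by
          simp only [Finset.sum_add_distrib]
      _ = 4 * ∑ k, ∑ l, W k a l t * h k l := by
          rw [P1lem ω ψp W h hω_skew hω_unit hψpψp hW1 hW3 hRic hstar
              hanticomm a t,
            P2lem ω ψp W h hω_skew hω_unit hψpψp hW3 hRic hstar hanticomm a t,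
            P3lem ψp W h hWψp a t, V1, V2]
          ring
  have E2 : ∑ b, ∑ c, ∑ p, ∑ u, (W a c p u * β p b u) * ψp t b c
      = 4 * ∑ k, ∑ l, W k a l t * h k l := by
    calc ∑ b, ∑ c, ∑ p, ∑ u, (W a c p u * β p b u) * ψp t b c
        = ∑ b, ∑ c, ∑ p, ∑ u, ∑ q,
            (W a c p u * (h p q * ψp q b u) * ψp t b c
              + W a c p u * (h b q * ψp p q u) * ψp t b c
              + W a c p u * (h u q * ψp p b q) * ψp t b c) := by
          refine sc4 fun b c p u => ?_
          rw [hβ p b u, Finset.mul_sum, Finset.sum_mul]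
          exact sum_congr6 fun q => by ring
      _ = (∑ b, ∑ c, ∑ p, ∑ u, ∑ q,
              W a c p u * (h p q * ψp q b u) * ψp t b c)
            + (∑ b, ∑ c, ∑ p, ∑ u, ∑ q,
              W a c p u * (h b q * ψp p q u) * ψp t b c)
            + (∑ b, ∑ c, ∑ p, ∑ u, ∑ q,
              W a c p u * (h u q * ψp p b q) * ψp t b c) := by
          simp only [Finset.sum_add_distrib]
      _ = 4 * ∑ k, ∑ l, W k a l t * h k l := by
          rw [P4lem ω ψp W h hω_skew hω_unit hψp2 hψpψp hW1 hW3 hRic hstar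
              hanticomm a t,
            P5lem ψp W h hψp2 hWψp a t,
            P6lem ω ψp W h hω_skew hω_unit hψp2 hψpψp hW3 hRic hstar
              hanticomm a t, V1, V2]
          ring
  calc ∑ b, ∑ c, γ a b c * ψp t b c
      = ∑ b, ∑ c, ∑ p, ∑ u,
          ((W a b p u * β p u c) * ψp t b c
            + (W a c p u * β p b u) * ψp t b c
            + (W b c p u * β a p u) * ψp t b c) := by
        refine sc2 fun b c => ?_
        rw [hγ a b c, Finset.sum_mul]
        refine sum_congr6 fun p => ?_
        rw [Finset.sum_mul]
        exact sum_congr6 fun u => by ring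
    _ = (∑ b, ∑ c, ∑ p, ∑ u, (W a b p u * β p u c) * ψp t b c)
          + (∑ b, ∑ c, ∑ p, ∑ u, (W a c p u * β p b u) * ψp t b c)
          + (∑ b, ∑ c, ∑ p, ∑ u, (W b c p u * β a p u) * ψp t b c) := by
        simp only [Finset.sum_add_distrib]
    _ = 8 * ∑ k, ∑ l, W k a l t * h k l := by
        rw [E1, E2, T3zero ψp W β hψp1 hψp2 hW3 hWψp a t]
        ring
end

section
/- On ℝ⁶, let (ω, ψ⁺, ψ⁻) satisfy the SU(3) contraction identities. Let c ∈ ℝ, X ∈ ℝ⁶, and let h₀ = ((h₀)_{ij}) be symmetric with ∑_i (h₀)_{ii} = 0 and commuting with ω (∑_p (h₀)_{ip}ω_{pj} = ∑_p ω_{ip}(h₀)_{pj}). Set h_{ij} = c δ_{ij} + ∑_u X_u ψ⁺_{uij} + (h₀)_{ij} and β = h ⋄ ω. Then ∑_k β_{ik}ω_{ak} = 2 h_{ia} for all i, a; in particular, a 2-form β = h ⋄ ω determines h by h = (1/2)β̂ with β̂_{ia} = ∑_k β_{ik}ω_{ak}. -/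
open scoped BigOperators

theorem two_form_hat_eq_two_h
    (ω : Fin 6 → Fin 6 → ℝ)
    (ψp ψm : Fin 6 → Fin 6 → Fin 6 → ℝ)
    (hω_skew : ∀ i j, ω i j = - ω j i)
    (hω_unit : ∀ i j, ∑ k, ω i k * ω j k = kd6 i j)
    (hψp1 : ∀ i j k, ψp i j k = - ψp j i k)
    (hψp2 : ∀ i j k, ψp i j k = - ψp i k j)
    (hψm1 : ∀ i j k, ψm i j k = - ψm j i k)
    (hψm2 : ∀ i j k, ψm i j k = - ψm i k j)
    (hψpω : ∀ i j a, ∑ k, ψp i j k * ω a k = - ψm i j a)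
    (hψpψp : ∀ i j a b, ∑ k, ψp i j k * ψp a b k =
      kd6 i a * kd6 j b - kd6 i b * kd6 j a - ω i a * ω j b + ω i b * ω j a)
    (c : ℝ) (X : EuclideanSpace ℝ (Fin 6))
    (h₀ : Fin 6 → Fin 6 → ℝ)
    (h₀symm : ∀ i j, h₀ i j = h₀ j i)
    (h₀tr : ∑ i, h₀ i i = 0)
    (h₀comm : ∀ i j, ∑ p, h₀ i p * ω p j = ∑ p, ω i p * h₀ p j)
    (h : Fin 6 → Fin 6 → ℝ)
    (hh : ∀ i j, h i j = c * kd6 i j + (∑ u, X u * ψp u i j) + h₀ i j)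
    (β : Fin 6 → Fin 6 → ℝ)
    (hβ : ∀ i j, β i j = ∑ p, (h i p * ω p j + h j p * ω i p)) :
    ∀ i a, ∑ k, β i k * ω a k = 2 * h i a := by
  -- contraction with ω on second slot
  have contr1 : ∀ (f : Fin 6 → ℝ) (a : Fin 6),
      ∑ k, (∑ p, f p * ω p k) * ω a k = f a := by
    intro f a
    simp only [Finset.sum_mul, mul_assoc]
    rw [Finset.sum_comm]
    simp only [← Finset.mul_sum, hω_unit]
    simp [kd6]
  -- contraction with ω on first slot
  have contr2 : ∀ (f : Fin 6 → ℝ) (a : Fin 6),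
      ∑ k, (∑ p, f p * ω k p) * ω a k = - f a := by
    intro f a
    have : ∀ k, (∑ p, f p * ω k p) = - ∑ p, f p * ω p k := by
      intro k
      rw [← Finset.sum_neg_distrib]
      exact Finset.sum_congr rfl fun p _ => by rw [hω_skew k p]; ring
    simp only [this, neg_mul, Finset.sum_neg_distrib, contr1]
  -- ψm contracted with ω gives ψp
  have hψmω : ∀ u i a, ∑ k, ψm u i k * ω a k = ψp u i a := by
    intro u i a
    have hm : ∀ k, ψm u i k = - ∑ p, ψp u i p * ω k p := by
      intro k; rw [hψpω u i k]; ring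
    calc ∑ k, ψm u i k * ω a k
        = - ∑ k, (∑ p, ψp u i p * ω k p) * ω a k := by
          simp only [hm, neg_mul, Finset.sum_neg_distrib]
      _ = ψp u i a := by rw [contr2]; ring
  intro i a
  -- split β
  have hsplit : ∑ k, β i k * ω a k
      = (∑ k, (∑ p, h i p * ω p k) * ω a k)
        + ∑ k, (∑ p, h k p * ω i p) * ω a k := by
    rw [← Finset.sum_add_distrib]
    refine Finset.sum_congr rfl fun k _ => ?_
    rw [hβ, Finset.sum_add_distrib, add_mul]
  rw [hsplit, contr1 (fun p => h i p) a]
  -- second term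
  have inner : ∀ k, ∑ p, h k p * ω i p
      = c * ω i k + (∑ u, X u * (- ψm u k i)) + (- ∑ p, (h₀ p i) * ω k p) := by
    intro k
    have e1 : ∑ p, (c * kd6 k p) * ω i p = c * ω i k := by
      simp [kd6, ite_mul, mul_assoc]
    have e2 : ∑ p, (∑ u, X u * ψp u k p) * ω i p
        = ∑ u, X u * (- ψm u k i) := by
      simp only [Finset.sum_mul]
      rw [Finset.sum_comm]
      refine Finset.sum_congr rfl fun u _ => ?_
      simp only [mul_assoc, ← Finset.mul_sum, hψpω u k i]
    have e3 : ∑ p, h₀ k p * ω i p = - ∑ p, (h₀ p i) * ω k p := by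
      have : ∑ p, h₀ k p * ω i p = - ∑ p, h₀ k p * ω p i := by
        rw [← Finset.sum_neg_distrib]
        exact Finset.sum_congr rfl fun p _ => by rw [hω_skew i p]; ring
      rw [this, h₀comm k i]
      congr 1
      exact Finset.sum_congr rfl fun p _ => by ring
    calc ∑ p, h k p * ω i p
        = ∑ p, ((c * kd6 k p) * ω i p + ((∑ u, X u * ψp u k p) * ω i p
            + h₀ k p * ω i p)) := by
          refine Finset.sum_congr rfl fun p _ => ?_
          rw [hh]; ring
      _ = _ := by
          rw [Finset.sum_add_distrib, Finset.sum_add_distrib, e1, e2, e3]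
          ring
  have T : ∑ k, (∑ p, h k p * ω i p) * ω a k = h i a := by
    simp only [inner, add_mul]
    rw [Finset.sum_add_distrib, Finset.sum_add_distrib]
    have t1 : ∑ k, (c * ω i k) * ω a k = c * kd6 i a := by
      simp only [mul_assoc, ← Finset.mul_sum, hω_unit]
    have t2 : ∑ k, (∑ u, X u * (- ψm u k i)) * ω a k = ∑ u, X u * ψp u i a := by
      simp only [Finset.sum_mul]
      rw [Finset.sum_comm]
      refine Finset.sum_congr rfl fun u _ => ?_
      have : ∀ k, X u * (- ψm u k i) * ω a k = X u * (ψm u i k * ω a k) := by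
        intro k; rw [hψm2 u k i]; ring
      simp only [this, ← Finset.mul_sum, hψmω]
    have t3 : ∑ k, (- ∑ p, (h₀ p i) * ω k p) * ω a k = h₀ i a := by
      simp only [neg_mul, Finset.sum_neg_distrib, contr2]
      rw [h₀symm a i]; ring
    rw [t1, t2, t3, hh]
  rw [T]; ring
end

section
/- On ℝ⁶, let (ω, ψ⁺, ψ⁻) satisfy the SU(3) contraction identities. Let c, λ ∈ ℝ, X ∈ ℝ⁶, and let h₋ = ((h₋)_{ij}) be symmetric and anticommuting with ω (∑_p (h₋)_{ip}ω_{pj} = −∑_p ω_{ip}(h₋)_{pj}). Set h_{ij} = c δ_{ij} + λ ω_{ij} + ∑_u X_u ψ⁺_{uij} + (h₋)_{ij} and β = h ⋄ ψ⁺. Then β̂_{ia} := ∑_{j,k} β_{ijk}ψ⁺_{ajk} = 2(6c) δ_{ia} + 12 λ ω_{ia} + 4 ∑_u X_u ψ⁺_{uia} + 4 (h₋)_{ia} for all i, a (i.e. β̂ = 2 tr(h) g + 12 λ ω + 4 h₆ + 4 h₋). -/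
open scoped BigOperators

lemma sum_mul_kd6 (f : Fin 6 → ℝ) (a : Fin 6) : ∑ p, f p * kd6 p a = f a := by
  simp [kd6, mul_ite]

lemma sum_kd6_mul (f : Fin 6 → ℝ) (a : Fin 6) : ∑ p, kd6 a p * f p = f a := by
  simp [kd6, ite_mul]

lemma kd6_self (a : Fin 6) : kd6 a a = 1 := by simp [kd6]

lemma kd6_symm (a b : Fin 6) : kd6 a b = kd6 b a := by simp [kd6, eq_comm]

theorem three_form_hat_formula
    (ω : Fin 6 → Fin 6 → ℝ)
    (ψp ψm : Fin 6 → Fin 6 → Fin 6 → ℝ)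
    (hω_skew : ∀ i j, ω i j = - ω j i)
    (hω_unit : ∀ i j, ∑ k, ω i k * ω j k = kd6 i j)
    (hψp1 : ∀ i j k, ψp i j k = - ψp j i k)
    (hψp2 : ∀ i j k, ψp i j k = - ψp i k j)
    (hψm1 : ∀ i j k, ψm i j k = - ψm j i k)
    (hψm2 : ∀ i j k, ψm i j k = - ψm i k j)
    (hψpω : ∀ i j a, ∑ k, ψp i j k * ω a k = - ψm i j a)
    (hψpψp : ∀ i j a b, ∑ k, ψp i j k * ψp a b k =
      kd6 i a * kd6 j b - kd6 i b * kd6 j a - ω i a * ω j b + ω i b * ω j a)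
    (c lam : ℝ) (X : EuclideanSpace ℝ (Fin 6))
    (hm : Fin 6 → Fin 6 → ℝ)
    (hm_symm : ∀ i j, hm i j = hm j i)
    (hm_anticomm : ∀ i j, ∑ p, hm i p * ω p j = - ∑ p, ω i p * hm p j)
    (h : Fin 6 → Fin 6 → ℝ)
    (hh : ∀ i j, h i j = c * kd6 i j + lam * ω i j
        + (∑ u, X u * ψp u i j) + hm i j)
    (β : Fin 6 → Fin 6 → Fin 6 → ℝ)
    (hβ : ∀ i j k, β i j k =
      ∑ p, (h i p * ψp p j k + h j p * ψp i p k + h k p * ψp i j p)) :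
    ∀ i a, ∑ j, ∑ k, β i j k * ψp a j k =
      2 * (6 * c) * kd6 i a + 12 * lam * ω i a
        + 4 * (∑ u, X u * ψp u i a) + 4 * hm i a := by
  intro i a
  -- basic derived facts
  have hωdiag : ∀ j, ω j j = 0 := fun j => by have := hω_skew j j; linarith
  have hψmdiag : ∀ u j, ψm u j j = 0 := fun u j => by have := hψm2 u j j; linarith
  have hψpdiag : ∀ u j, ψp u j j = 0 := fun u j => by have := hψp2 u j j; linarith
  have hω2 : ∀ x y, ∑ j, ω x j * ω j y = - kd6 x y := by
    intro x y
    have e : ∀ j, ω x j * ω j y = -(ω x j * ω y j) := by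
      intro j; rw [hω_skew j y]; ring
    simp_rw [e, Finset.sum_neg_distrib, hω_unit]
  -- split the triple sum into three parts
  have split : ∑ j, ∑ k, β i j k * ψp a j k
      = (∑ j, ∑ k, ∑ p, h i p * ψp p j k * ψp a j k)
      + (∑ j, ∑ k, ∑ p, h j p * ψp i p k * ψp a j k)
      + (∑ j, ∑ k, ∑ p, h k p * ψp i j p * ψp a j k) := by
    simp_rw [hβ, Finset.sum_mul, add_mul, Finset.sum_add_distrib]
  -- Part A
  have C1 : ∀ p, (∑ j, ∑ k, ψp p j k * ψp a j k) = 4 * kd6 p a := by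
    intro p
    have e : ∀ j, (∑ k, ψp p j k * ψp a j k)
        = kd6 p a * kd6 j j - kd6 p j * kd6 j a - ω p a * ω j j + ω p j * ω j a :=
      fun j => hψpψp p j a j
    simp_rw [e, kd6_self, hωdiag, mul_zero, mul_one, sub_zero]
    rw [Finset.sum_add_distrib, Finset.sum_sub_distrib, Finset.sum_const,
      Finset.card_univ, Fintype.card_fin, sum_kd6_mul, hω2]
    push_cast
    ring
  have hA : (∑ j, ∑ k, ∑ p, h i p * ψp p j k * ψp a j k) = 4 * h i a := by
    have e1 : ∀ j, (∑ k, ∑ p, h i p * ψp p j k * ψp a j k)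
        = ∑ p, ∑ k, h i p * ψp p j k * ψp a j k := fun j => Finset.sum_comm
    simp_rw [e1]
    rw [Finset.sum_comm]
    have e2 : ∀ p j k, h i p * ψp p j k * ψp a j k = h i p * (ψp p j k * ψp a j k) :=
      fun p j k => by ring
    simp_rw [e2, ← Finset.mul_sum, C1]
    have e3 : ∀ p, h i p * (4 * kd6 p a) = 4 * (h i p * kd6 p a) := fun p => by ring
    simp_rw [e3, ← Finset.mul_sum, sum_mul_kd6]
  -- generic contraction for parts B and C
  have hBC : ∀ g : Fin 6 → Fin 6 → ℝ,
      (∑ j, ∑ p, g j p * (kd6 i a * kd6 p j - kd6 i j * kd6 p a - ω i a * ω p j + ω i j * ω p a))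
      = kd6 i a * (∑ j, g j j) - g i a - ω i a * (∑ j, ∑ p, g j p * ω p j)
        + (∑ j, ω i j * ∑ p, g j p * ω p a) := by
    intro g
    have e : ∀ j p, g j p * (kd6 i a * kd6 p j - kd6 i j * kd6 p a - ω i a * ω p j + ω i j * ω p a)
        = kd6 i a * (g j p * kd6 p j) - kd6 i j * (g j p * kd6 p a)
          - ω i a * (g j p * ω p j) + ω i j * (g j p * ω p a) := fun j p => by ring
    simp_rw [e, Finset.sum_add_distrib, Finset.sum_sub_distrib, ← Finset.mul_sum,
      sum_mul_kd6]
    rw [sum_kd6_mul]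
  -- Part B
  have hB : (∑ j, ∑ k, ∑ p, h j p * ψp i p k * ψp a j k)
      = kd6 i a * (∑ j, h j j) - h i a - ω i a * (∑ j, ∑ p, h j p * ω p j)
        + (∑ j, ω i j * ∑ p, h j p * ω p a) := by
    have e1 : ∀ j, (∑ k, ∑ p, h j p * ψp i p k * ψp a j k)
        = ∑ p, ∑ k, h j p * ψp i p k * ψp a j k := fun j => Finset.sum_comm
    simp_rw [e1]
    have e2 : ∀ j p k, h j p * ψp i p k * ψp a j k = h j p * (ψp i p k * ψp a j k) :=
      fun j p k => by ring
    simp_rw [e2, ← Finset.mul_sum, hψpψp]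
    exact hBC h
  -- Part C
  have hC : (∑ j, ∑ k, ∑ p, h k p * ψp i j p * ψp a j k)
      = kd6 i a * (∑ j, h j j) - h i a - ω i a * (∑ j, ∑ p, h j p * ω p j)
        + (∑ j, ω i j * ∑ p, h j p * ω p a) := by
    rw [Finset.sum_comm]
    have e1 : ∀ k j, (∑ p, h k p * ψp i j p * ψp a j k)
        = ∑ p, h k p * (ψp i p j * ψp a k j) := by
      intro k j
      refine Finset.sum_congr rfl fun p _ => ?_
      rw [hψp2 i j p, hψp2 a j k]; ring
    simp_rw [e1]
    have e2 : ∀ k, (∑ j, ∑ p, h k p * (ψp i p j * ψp a k j))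
        = ∑ p, ∑ j, h k p * (ψp i p j * ψp a k j) := fun k => Finset.sum_comm
    simp_rw [e2, ← Finset.mul_sum, hψpψp]
    exact hBC h
  -- trace of hm vanishes
  have trhm : (∑ j, hm j j) = 0 := by
    have E1 : (∑ j, ∑ p, ∑ q, ω j p * (hm p q * ω q j)) = -(∑ j, hm j j) := by
      have e1 : ∀ j p, (∑ q, ω j p * (hm p q * ω q j))
          = ∑ q, hm p q * (ω q j * ω j p) :=
        fun j p => Finset.sum_congr rfl fun q _ => by ring
      simp_rw [e1]
      rw [Finset.sum_comm]
      have e2 : ∀ p, (∑ j, ∑ q, hm p q * (ω q j * ω j p))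
          = ∑ q, ∑ j, hm p q * (ω q j * ω j p) := fun p => Finset.sum_comm
      simp_rw [e2]
      have e3 : ∀ p q, (∑ j, hm p q * (ω q j * ω j p)) = -(hm p q * kd6 q p) := by
        intro p q
        rw [← Finset.mul_sum, hω2]; ring
      simp_rw [e3, Finset.sum_neg_distrib, sum_mul_kd6]
    have E2 : (∑ j, ∑ p, ∑ q, ω j p * (hm p q * ω q j)) = ∑ j, hm j j := by
      have e1 : ∀ j p, (∑ q, ω j p * (hm p q * ω q j))
          = ω j p * (∑ q, hm p q * ω q j) := fun j p => by rw [Finset.mul_sum]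
      simp_rw [e1, hm_anticomm]
      have e2 : ∀ j p, ω j p * -(∑ q, ω p q * hm q j)
          = ∑ q, -(hm q j * (ω j p * ω p q)) := by
        intro j p
        rw [mul_neg, Finset.mul_sum, ← Finset.sum_neg_distrib]
        exact Finset.sum_congr rfl fun q _ => by ring
      simp_rw [e2]
      have e3 : ∀ j, (∑ p, ∑ q, -(hm q j * (ω j p * ω p q)))
          = ∑ q, ∑ p, -(hm q j * (ω j p * ω p q)) := fun j => Finset.sum_comm
      simp_rw [e3]
      have e4 : ∀ j q, (∑ p, -(hm q j * (ω j p * ω p q))) = kd6 j q * hm q j := by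
        intro j q
        rw [Finset.sum_neg_distrib, ← Finset.mul_sum, hω2]; ring
      simp_rw [e4, sum_kd6_mul]
    linarith [E1, E2]
  -- trace of h
  have trh : (∑ j, h j j) = 6 * c := by
    simp_rw [hh, kd6_self, hωdiag, hψpdiag, mul_zero, mul_one, add_zero]
    rw [Finset.sum_add_distrib, Finset.sum_const, Finset.card_univ, Fintype.card_fin, trhm]
    push_cast; ring
  -- S = tr(h ω) = -6 lam
  have hSm : (∑ j, ∑ p, hm j p * ω p j) = 0 := by
    have e : (∑ j, ∑ p, hm j p * ω p j) = -(∑ j, ∑ p, hm j p * ω p j) := by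
      nth_rewrite 1 [Finset.sum_comm]
      calc ∑ p : Fin 6, ∑ j : Fin 6, hm j p * ω p j
          = ∑ p : Fin 6, ∑ j : Fin 6, -(hm p j * ω j p) := by
            refine Finset.sum_congr rfl fun p _ => Finset.sum_congr rfl fun j _ => ?_
            rw [hm_symm j p, hω_skew p j]; ring
        _ = -(∑ p : Fin 6, ∑ j : Fin 6, hm p j * ω j p) := by
            simp_rw [Finset.sum_neg_distrib]
    linarith [e]
  have hS : (∑ j, ∑ p, h j p * ω p j) = -(6 * lam) := by
    have e : ∀ j p, h j p * ω p j
        = c * (kd6 j p * ω p j) + lam * (ω j p * ω p j)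
          + (∑ u, (X u * ψp u j p) * ω p j) + hm j p * ω p j := by
      intro j p; rw [hh j p, add_mul, add_mul, add_mul, Finset.sum_mul]; ring
    simp_rw [e, Finset.sum_add_distrib]
    have p1 : (∑ j, ∑ p, c * (kd6 j p * ω p j)) = 0 := by
      simp_rw [← Finset.mul_sum, sum_kd6_mul, hωdiag, Finset.sum_const_zero, mul_zero]
    have p2 : (∑ j, ∑ p, lam * (ω j p * ω p j)) = -(6 * lam) := by
      simp_rw [← Finset.mul_sum, hω2, kd6_self]
      rw [Finset.sum_const, Finset.card_univ, Fintype.card_fin]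
      push_cast; ring
    have p3 : (∑ j, ∑ p, ∑ u, (X u * ψp u j p) * ω p j) = 0 := by
      have e1 : ∀ j, (∑ p, ∑ u, (X u * ψp u j p) * ω p j)
          = ∑ u, ∑ p, (X u * ψp u j p) * ω p j := fun j => Finset.sum_comm
      simp_rw [e1]
      have e2 : ∀ j u, (∑ p, (X u * ψp u j p) * ω p j) = 0 := by
        intro j u
        have e3 : ∀ p, (X u * ψp u j p) * ω p j = -(X u * (ψp u j p * ω j p)) := by
          intro p; rw [hω_skew p j]; ring
        simp_rw [e3, Finset.sum_neg_distrib, ← Finset.mul_sum, hψpω, hψmdiag]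
        simp
      simp_rw [e2, Finset.sum_const_zero]
    rw [p1, p2, p3, hSm]
    ring
  -- M = (ω h ω)_{ia}
  have hM : (∑ j, ω i j * ∑ p, h j p * ω p a)
      = -(c * kd6 i a) - lam * ω i a + (∑ u, X u * ψp u i a) + hm i a := by
    have unfactor : (∑ j, ω i j * ∑ p, h j p * ω p a)
        = ∑ j, ∑ p, ω i j * (h j p * ω p a) := by
      refine Finset.sum_congr rfl fun j _ => ?_
      rw [Finset.mul_sum]
    rw [unfactor]
    have e : ∀ j p, ω i j * (h j p * ω p a)
        = c * (ω i j * (kd6 j p * ω p a)) + lam * (ω i j * (ω j p * ω p a))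
          + (∑ u, X u * (ω i j * (ψp u j p * ω p a))) + ω i j * (hm j p * ω p a) := by
      intro j p
      have t : ω i j * ((∑ u, X u * ψp u j p) * ω p a)
          = ∑ u, X u * (ω i j * (ψp u j p * ω p a)) := by
        rw [Finset.sum_mul, Finset.mul_sum]
        exact Finset.sum_congr rfl fun u _ => by ring
      rw [hh j p, ← t]
      ring
    simp_rw [e, Finset.sum_add_distrib]
    have m1 : (∑ j, ∑ p, c * (ω i j * (kd6 j p * ω p a))) = -(c * kd6 i a) := by
      have e1 : ∀ j, (∑ p, c * (ω i j * (kd6 j p * ω p a)))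
          = c * ω i j * (∑ p, kd6 j p * ω p a) := by
        intro j; rw [Finset.mul_sum]
        exact Finset.sum_congr rfl fun p _ => by ring
      simp_rw [e1, sum_kd6_mul]
      have e2 : ∀ j, c * ω i j * ω j a = c * (ω i j * ω j a) := fun j => by ring
      simp_rw [e2, ← Finset.mul_sum, hω2]
      ring
    have m2 : (∑ j, ∑ p, lam * (ω i j * (ω j p * ω p a))) = -(lam * ω i a) := by
      have e1 : ∀ j, (∑ p, lam * (ω i j * (ω j p * ω p a)))
          = lam * ω i j * (∑ p, ω j p * ω p a) := by
        intro j; rw [Finset.mul_sum]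
        exact Finset.sum_congr rfl fun p _ => by ring
      simp_rw [e1, hω2]
      have e2 : ∀ j, lam * ω i j * -kd6 j a = -(lam * (ω i j * kd6 j a)) := fun j => by ring
      simp_rw [e2, Finset.sum_neg_distrib, ← Finset.mul_sum]
      rw [show (∑ j, ω i j * kd6 j a) = ω i a from sum_mul_kd6 (fun j => ω i j) a]
    have m3 : (∑ j, ∑ p, ∑ u, X u * (ω i j * (ψp u j p * ω p a)))
        = ∑ u, X u * ψp u i a := by
      have e1 : ∀ j, (∑ p, ∑ u, X u * (ω i j * (ψp u j p * ω p a)))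
          = ∑ u, ∑ p, X u * (ω i j * (ψp u j p * ω p a)) := fun j => Finset.sum_comm
      simp_rw [e1]
      have e1' : (∑ j, ∑ u, ∑ p, X u * (ω i j * (ψp u j p * ω p a)))
          = ∑ u, ∑ j, ∑ p, X u * (ω i j * (ψp u j p * ω p a)) := Finset.sum_comm
      rw [e1']
      refine Finset.sum_congr rfl fun u _ => ?_
      -- inner: ∑_p ψp u j p * ω p a = ψm u j a
      have inner1 : ∀ j, (∑ p, ψp u j p * ω p a) = ψm u j a := by
        intro j
        have e2 : ∀ p, ψp u j p * ω p a = -(ψp u j p * ω a p) := by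
          intro p; rw [hω_skew p a]; ring
        simp_rw [e2, Finset.sum_neg_distrib, hψpω]
        ring
      have e3 : ∀ j, (∑ p, X u * (ω i j * (ψp u j p * ω p a)))
          = X u * ω i j * ψm u j a := by
        intro j
        rw [show (∑ p, X u * (ω i j * (ψp u j p * ω p a)))
            = X u * ω i j * (∑ p, ψp u j p * ω p a) from by
          rw [Finset.mul_sum]; exact Finset.sum_congr rfl fun p _ => by ring, inner1]
      simp_rw [e3]
      -- ψm u j a = ∑_k ψp u a k * ω j k
      have e4 : ∀ j, ψm u j a = ∑ k, ψp u a k * ω j k := by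
        intro j
        rw [hψm2 u j a, ← hψpω u a j]
      have e5 : ∀ j, X u * ω i j * ψm u j a
          = ∑ k, X u * (ψp u a k * (ω i j * ω j k)) := by
        intro j
        rw [e4, Finset.mul_sum]
        exact Finset.sum_congr rfl fun k _ => by ring
      simp_rw [e5]
      rw [Finset.sum_comm]
      have e6 : ∀ k, (∑ j, X u * (ψp u a k * (ω i j * ω j k)))
          = X u * ψp u a k * (∑ j, ω i j * ω j k) := by
        intro k; rw [Finset.mul_sum]
        exact Finset.sum_congr rfl fun j _ => by ring
      simp_rw [e6, hω2]
      have e7 : ∀ k, X u * ψp u a k * -kd6 i k = -(X u * (kd6 i k * ψp u a k)) :=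
        fun k => by ring
      simp_rw [e7, Finset.sum_neg_distrib]
      have e8 : (∑ k, X u * (kd6 i k * ψp u a k))
          = X u * (∑ k, kd6 i k * ψp u a k) := by
        rw [Finset.mul_sum]
      rw [e8, sum_kd6_mul, hψp2 u a i]
      ring
    have m4 : (∑ j, ∑ p, ω i j * (hm j p * ω p a)) = hm i a := by
      have e1 : (∑ j, ∑ p, ω i j * (hm j p * ω p a))
          = ∑ p, ∑ j, ω i j * (hm j p * ω p a) := Finset.sum_comm
      rw [e1]
      have e2 : ∀ p, (∑ j, ω i j * (hm j p * ω p a))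
          = (∑ j, ω i j * hm j p) * ω p a := by
        intro p; rw [Finset.sum_mul]
        exact Finset.sum_congr rfl fun j _ => by ring
      have e3 : ∀ p, (∑ j, ω i j * hm j p) = -∑ j, hm i j * ω j p := by
        intro p; rw [hm_anticomm i p, neg_neg]
      simp_rw [e2, e3]
      have e4 : ∀ p, (-∑ j, hm i j * ω j p) * ω p a
          = ∑ j, -(hm i j * (ω j p * ω p a)) := by
        intro p
        rw [neg_mul, Finset.sum_mul, ← Finset.sum_neg_distrib]
        exact Finset.sum_congr rfl fun j _ => by ring
      simp_rw [e4]
      rw [Finset.sum_comm]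
      have e5 : ∀ j, (∑ p, -(hm i j * (ω j p * ω p a))) = hm i j * kd6 j a := by
        intro j
        rw [Finset.sum_neg_distrib, ← Finset.mul_sum, hω2]; ring
      simp_rw [e5, sum_mul_kd6]
    rw [m1, m2, m3, m4]
    ring
  -- assemble
  rw [split, hA, hB, hC, trh, hS, hM, hh i a]
  ring
end

section
/- On ℝ⁶, let (ω, ψ⁺, ψ⁻) satisfy the SU(3) contraction identities. Then: (a) g ⋄ ω = 2ω, i.e. ∑_p (δ_{ip}ω_{pj} + δ_{jp}ω_{ip}) = 2ω_{ij}; (b) for every X ∈ ℝ⁶, the 2-form β with β_{ij} = ∑_u X_u ψ⁺_{uij} satisfies (β ⋄ ω)_{ij} := ∑_p (β_{ip}ω_{pj} + β_{jp}ω_{ip}) = −2 ∑_u (JX)_u ψ⁺_{uij}, where (JX)_p = ∑_a X_a ω_{ap}; (c) for every symmetric h with ∑_i h_{ii} = 0 and commuting with ω (∑_p h_{ip}ω_{pj} = ∑_p ω_{ip}h_{pj}), the 2-form β = h ⋄ ω satisfies ∑_{i,j} β_{ij}ω_{ij} = 0 and ∑_{i,j} β_{ij}ψ⁺_{ijk}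 = 0 for all k (so h ⋄ ω lies in Ω²₈). -/
open scoped BigOperators

theorem diamond_omega_on_two_forms
    (ω : Fin 6 → Fin 6 → ℝ)
    (ψp ψm : Fin 6 → Fin 6 → Fin 6 → ℝ)
    (hω_skew : ∀ i j, ω i j = - ω j i)
    (hω_unit : ∀ i j, ∑ k, ω i k * ω j k = kd6 i j)
    (hψp1 : ∀ i j k, ψp i j k = - ψp j i k)
    (hψp2 : ∀ i j k, ψp i j k = - ψp i k j)
    (hψm1 : ∀ i j k, ψm i j k = - ψm j i k)
    (hψm2 : ∀ i j k, ψm i j k = - ψm i k j)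
    (hψpω : ∀ i j a, ∑ k, ψp i j k * ω a k = - ψm i j a)
    (hψpψp : ∀ i j a b, ∑ k, ψp i j k * ψp a b k =
      kd6 i a * kd6 j b - kd6 i b * kd6 j a - ω i a * ω j b + ω i b * ω j a) :
    (∀ i j, ∑ p, (kd6 i p * ω p j + kd6 j p * ω i p) = 2 * ω i j) ∧
    (∀ X : EuclideanSpace ℝ (Fin 6), ∀ i j,
      ∑ p, ((∑ u, X u * ψp u i p) * ω p j + (∑ u, X u * ψp u j p) * ω i p)
        = -2 * ∑ u, (∑ a, X a * ω a u) * ψp u i j) ∧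
    (∀ h : Fin 6 → Fin 6 → ℝ, (∀ i j, h i j = h j i) → (∑ i, h i i) = 0 →
      (∀ i j, ∑ p, h i p * ω p j = ∑ p, ω i p * h p j) →
      (∑ i, ∑ j, (∑ p, (h i p * ω p j + h j p * ω i p)) * ω i j = 0) ∧
      (∀ k, ∑ i, ∑ j, (∑ p, (h i p * ω p j + h j p * ω i p)) * ψp i j k = 0)) := by
  refine ⟨?_, ?_, ?_⟩
  · -- part (a)
    intro i j
    simp [kd6, ite_mul, Finset.sum_add_distrib, Finset.sum_ite_eq, two_mul]
  · -- part (b)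
    intro X i j
    have key1 : ∀ u, ∑ p, ψp u i p * ω p j = ψm u i j := by
      intro u
      have h := hψpω u i j
      calc ∑ p, ψp u i p * ω p j = ∑ p, -(ψp u i p * ω j p) := by
            refine Finset.sum_congr rfl fun p _ => ?_
            rw [hω_skew p j]; ring
        _ = -∑ p, ψp u i p * ω j p := by rw [Finset.sum_neg_distrib]
        _ = ψm u i j := by rw [h]; ring
    have key2 : ∀ u, ∑ p, ψp u j p * ω i p = ψm u i j := by
      intro u
      rw [hψpω u j i, hψm2 u j i]; ring
    have key3 : ∀ a, ∑ u, ω a u * ψp u i j = - ψm a i j := by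
      intro a
      calc ∑ u, ω a u * ψp u i j = ∑ u, ψp i j u * ω a u := by
            refine Finset.sum_congr rfl fun u _ => ?_
            rw [hψp1 u i j, hψp2 i u j]; ring
        _ = - ψm i j a := hψpω i j a
        _ = - ψm a i j := by rw [hψm1 a i j, hψm2 i a j]; ring
    have lhs1 : ∑ p, (∑ u, X u * ψp u i p) * ω p j = ∑ u, X u * ψm u i j := by
      simp_rw [Finset.sum_mul]
      rw [Finset.sum_comm]
      refine Finset.sum_congr rfl fun u _ => ?_
      rw [← key1 u, Finset.mul_sum]
      exact Finset.sum_congr rfl fun p _ => by ring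
    have lhs2 : ∑ p, (∑ u, X u * ψp u j p) * ω i p = ∑ u, X u * ψm u i j := by
      simp_rw [Finset.sum_mul]
      rw [Finset.sum_comm]
      refine Finset.sum_congr rfl fun u _ => ?_
      rw [← key2 u, Finset.mul_sum]
      exact Finset.sum_congr rfl fun p _ => by ring
    have rhs : ∑ u, (∑ a, X a * ω a u) * ψp u i j = ∑ a, X a * (-ψm a i j) := by
      simp_rw [Finset.sum_mul]
      rw [Finset.sum_comm]
      refine Finset.sum_congr rfl fun a _ => ?_
      rw [← key3 a, Finset.mul_sum]
      exact Finset.sum_congr rfl fun u _ => by ring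
    rw [Finset.sum_add_distrib, lhs1, lhs2, rhs, ← Finset.sum_add_distrib,
      Finset.mul_sum]
    exact Finset.sum_congr rfl fun u _ => by ring
  · -- part (c)
    intro h hsym htr _hcomm
    have sq1 : ∀ p i, ∑ j, ω p j * ω i j = kd6 p i := hω_unit
    have sq2 : ∀ p j, ∑ i, ω i p * ω i j = kd6 p j := by
      intro p j
      calc ∑ i, ω i p * ω i j = ∑ i, ω p i * ω j i := by
            refine Finset.sum_congr rfl fun i _ => ?_
            rw [hω_skew i p, hω_skew i j]; ring
        _ = kd6 p j := hω_unit p j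
    constructor
    · simp_rw [Finset.sum_add_distrib, add_mul, Finset.sum_add_distrib, Finset.sum_mul]
      have t1 : ∑ i, ∑ j, ∑ p, h i p * ω p j * ω i j = 0 := by
        have e : ∀ i, ∑ j, ∑ p, h i p * ω p j * ω i j = h i i := by
          intro i
          rw [Finset.sum_comm]
          calc ∑ p, ∑ j, h i p * ω p j * ω i j
              = ∑ p, h i p * kd6 p i := by
                refine Finset.sum_congr rfl fun p _ => ?_
                rw [← sq1 p i, Finset.mul_sum]
                exact Finset.sum_congr rfl fun j _ => by ring
            _ = h i i := by simp [kd6, mul_ite]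
        simp_rw [e]; exact htr
      have t2 : ∑ i, ∑ j, ∑ p, h j p * ω i p * ω i j = 0 := by
        rw [Finset.sum_comm]
        have e : ∀ j, ∑ i, ∑ p, h j p * ω i p * ω i j = h j j := by
          intro j
          rw [Finset.sum_comm]
          calc ∑ p, ∑ i, h j p * ω i p * ω i j
              = ∑ p, h j p * kd6 p j := by
                refine Finset.sum_congr rfl fun p _ => ?_
                rw [← sq2 p j, Finset.mul_sum]
                exact Finset.sum_congr rfl fun i _ => by ring
            _ = h j j := by simp [kd6, mul_ite]
        simp_rw [e]; exact htr
      rw [t1, t2]; ring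
    · intro k
      have c1 : ∀ i p, ∑ j, ω p j * ψp i j k = ψm i k p := by
        intro i p
        calc ∑ j, ω p j * ψp i j k = ∑ j, -(ψp i k j * ω p j) := by
              refine Finset.sum_congr rfl fun j _ => ?_
              rw [hψp2 i j k]; ring
          _ = -∑ j, ψp i k j * ω p j := by rw [Finset.sum_neg_distrib]
          _ = ψm i k p := by rw [hψpω i k p]; ring
      have c2 : ∀ j p, ∑ i, ω i p * ψp i j k = ψm j k p := by
        intro j p
        calc ∑ i, ω i p * ψp i j k = ∑ i, -(ψp j k i * ω p i) := by
              refine Finset.sum_congr rfl fun i _ => ?_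
              rw [hψp1 i j k, hψp2 j i k, hω_skew i p]; ring
          _ = -∑ i, ψp j k i * ω p i := by rw [Finset.sum_neg_distrib]
          _ = ψm j k p := by rw [hψpω j k p]; ring
      have S0 : ∑ i, ∑ p, h i p * ψm i k p = 0 := by
        have hSneg : ∑ i, ∑ p, h i p * ψm i k p
            = -∑ i, ∑ p, h i p * ψm i k p := by
          calc ∑ i, ∑ p, h i p * ψm i k p
              = ∑ p, ∑ i, h i p * ψm i k p := Finset.sum_comm
            _ = ∑ i, ∑ p, h p i * ψm p k i := rfl
            _ = ∑ i, ∑ p, -(h i p * ψm i k p) := by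
                refine Finset.sum_congr rfl fun i _ => ?_
                refine Finset.sum_congr rfl fun p _ => ?_
                rw [hsym p i, hψm1 p k i, hψm2 k p i, hψm1 k i p]; ring
            _ = -∑ i, ∑ p, h i p * ψm i k p := by
                simp [Finset.sum_neg_distrib]
        linarith
      simp_rw [Finset.sum_add_distrib, add_mul, Finset.sum_add_distrib, Finset.sum_mul]
      have tA : ∑ i, ∑ j, ∑ p, h i p * ω p j * ψp i j k = 0 := by
        have e : ∀ i, ∑ j, ∑ p, h i p * ω p j * ψp i j k
            = ∑ p, h i p * ψm i k p := by
          intro i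
          rw [Finset.sum_comm]
          refine Finset.sum_congr rfl fun p _ => ?_
          rw [← c1 i p, Finset.mul_sum]
          exact Finset.sum_congr rfl fun j _ => by ring
        simp_rw [e]; exact S0
      have tB : ∑ i, ∑ j, ∑ p, h j p * ω i p * ψp i j k = 0 := by
        rw [Finset.sum_comm]
        have e : ∀ j, ∑ i, ∑ p, h j p * ω i p * ψp i j k
            = ∑ p, h j p * ψm j k p := by
          intro j
          rw [Finset.sum_comm]
          refine Finset.sum_congr rfl fun p _ => ?_
          rw [← c2 j p, Finset.mul_sum]
          exact Finset.sum_congr rfl fun i _ => by ring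
        simp_rw [e]; exact S0
      rw [tA, tB]; ring
end

section
/- For all vectors b, c, d, e ∈ ℝ³ satisfying 2⟨b,d⟩ + 2⟨c,e⟩ + ⟨b,e⟩ + ⟨c,d⟩ = 0, one has |b|²|e|² + |c|²|d|² − 2⟨b,c⟩⟨d,e⟩ − 2⟨b,d⟩⟨c,e⟩ + 2⟨b,e⟩⟨c,d⟩ ≥ 0. -/
open scoped BigOperators InnerProductSpace
set_option maxHeartbeats 2000000

theorem su2_cross_product_inequality
    (b c d e : EuclideanSpace ℝ (Fin 3))
    (hortho : 2 * ⟪b, d⟫_ℝ + 2 * ⟪c, e⟫_ℝ + ⟪b, e⟫_ℝ + ⟪c, d⟫_ℝ = 0) :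
    0 ≤ ‖b‖ ^ 2 * ‖e‖ ^ 2 + ‖c‖ ^ 2 * ‖d‖ ^ 2
      - 2 * ⟪b, c⟫_ℝ * ⟪d, e⟫_ℝ - 2 * ⟪b, d⟫_ℝ * ⟪c, e⟫_ℝ
      + 2 * ⟪b, e⟫_ℝ * ⟪c, d⟫_ℝ := by
  have hi : ∀ x y : EuclideanSpace ℝ (Fin 3), ⟪x, y⟫_ℝ = x 0 * y 0 + x 1 * y 1 + x 2 * y 2 := by
    intro x y
    simp [PiLp.inner_apply, Fin.sum_univ_three, mul_comm]
  have hn : ∀ x : EuclideanSpace ℝ (Fin 3), ‖x‖ ^ 2 = x 0 ^ 2 + x 1 ^ 2 + x 2 ^ 2 := by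
    intro x
    rw [← real_inner_self_eq_norm_sq, hi]; ring
  simp only [hi, hn] at hortho ⊢
  set p : ℝ := b 0 * d 0 + b 1 * d 1 + b 2 * d 2 with hp
  set q : ℝ := c 0 * e 0 + c 1 * e 1 + c 2 * e 2 with hq
  set s : ℝ := b 0 * e 0 + b 1 * e 1 + b 2 * e 2 with hs
  set t : ℝ := c 0 * d 0 + c 1 * d 1 + c 2 * d 2 with ht
  have key : (b 0 ^ 2 + b 1 ^ 2 + b 2 ^ 2) * (e 0 ^ 2 + e 1 ^ 2 + e 2 ^ 2)
      + (c 0 ^ 2 + c 1 ^ 2 + c 2 ^ 2) * (d 0 ^ 2 + d 1 ^ 2 + d 2 ^ 2)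
      - 2 * (b 0 * c 0 + b 1 * c 1 + b 2 * c 2) * (d 0 * e 0 + d 1 * e 1 + d 2 * e 2)
      - 2 * p * q + 2 * s * t
      = (b 1 * e 2 - b 2 * e 1 - (c 1 * d 2 - c 2 * d 1)) ^ 2
      + (b 2 * e 0 - b 0 * e 2 - (c 2 * d 0 - c 0 * d 2)) ^ 2
      + (b 0 * e 1 - b 1 * e 0 - (c 0 * d 1 - c 1 * d 0)) ^ 2
      + (2 * p + q) ^ 2 + 3 * q ^ 2
      + (s + t - 2 * p - 2 * q) * (2 * p + 2 * q + s + t) := by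
    rw [hp, hq, hs, ht]; ring
  have h0 : 2 * p + 2 * q + s + t = 0 := by linarith
  rw [h0, mul_zero, add_zero] at key
  nlinarith [sq_nonneg (b 1 * e 2 - b 2 * e 1 - (c 1 * d 2 - c 2 * d 1)),
    sq_nonneg (b 2 * e 0 - b 0 * e 2 - (c 2 * d 0 - c 0 * d 2)),
    sq_nonneg (b 0 * e 1 - b 1 * e 0 - (c 0 * d 1 - c 1 * d 0)),
    sq_nonneg (2 * p + q), sq_nonneg q, key]
end
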